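/- arXiv:0812.3433 — 3 statements merged into one kernel-verified Lean document; each statement's English description precedes it below -/
import Mathlib

section
/- Let G be a group and let H be a subgroup of G containing the commutator subgroup [G,G]. Let B = G/(H·Z(G)), where Z(G) is the center of G. Then [H,G] is a normal subgroup of [G,G] with abelian quotient, and there is a surjective group homomorphism from the exterior square B ∧ B onto [G,G]/[H,G], sending (a·H·Z(G)) ∧ (b·H·Z(G)) to the class of aba^{-1}b^{-1} modulo [H,G]. -/
set_option synthInstance.maxHeartbeats 1000000
set_option maxHeartbeats 2000000

open scoped commutatorElement

section Aux

variable {G : Type} [Group G]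

private theorem normal_of_commutator_le' (H : Subgroup G) (hH : commutator G ≤ H) :
    H.Normal := by
  constructor
  intro n hn g
  have h1 : ⁅g, n⁆ ∈ commutator G :=
    Subgroup.commutator_mem_commutator (Subgroup.mem_top g) (Subgroup.mem_top n)
  have h2 : g * n * g⁻¹ = ⁅g, n⁆ * n := by
    simp only [commutatorElement_def]; group
  rw [h2]
  exact H.mul_mem (hH h1) hn

private theorem aux_main (H : Subgroup G) (hH : commutator G ≤ H)
    (hN : (H ⊔ Subgroup.center G).Normal) :
    letI := hN
    ∀ (hcommB : ∀ x y : G ⧸ (H ⊔ Subgroup.center G), x * y = y * x),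
    letI : CommGroup (G ⧸ (H ⊔ Subgroup.center G)) :=
      { (inferInstance : Group (G ⧸ (H ⊔ Subgroup.center G))) with mul_comm := hcommB }
    ∀ (hnorm2 : ((⁅H, (⊤ : Subgroup G)⁆).subgroupOf (commutator G)).Normal),
    letI := hnorm2
    ∀ (hcommQ : ∀ x y : (commutator G) ⧸
        ((⁅H, (⊤ : Subgroup G)⁆).subgroupOf (commutator G)), x * y = y * x),
    letI : CommGroup ((commutator G) ⧸
        ((⁅H, (⊤ : Subgroup G)⁆).subgroupOf (commutator G))) :=
      { (inferInstance : Group _) with mul_comm := hcommQ }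
    ∃ f : (⋀[ℤ]^2 (Additive (G ⧸ (H ⊔ Subgroup.center G)))) →ₗ[ℤ]
        (Additive ((commutator G) ⧸ ((⁅H, (⊤ : Subgroup G)⁆).subgroupOf (commutator G)))),
      Function.Surjective f ∧
      ∀ (a b : G) (hab : ⁅a, b⁆ ∈ commutator G),
        f ⟨ExteriorAlgebra.ιMulti ℤ 2
              ![Additive.ofMul (QuotientGroup.mk a), Additive.ofMul (QuotientGroup.mk b)],
            ExteriorAlgebra.ιMulti_range ℤ 2 (Set.mem_range_self _)⟩
          = Additive.ofMul (QuotientGroup.mk (⟨⁅a, b⁆, hab⟩ : commutator G)) := by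
  letI := hN
  intro hcommB
  letI instB : CommGroup (G ⧸ (H ⊔ Subgroup.center G)) :=
    { (inferInstance : Group (G ⧸ (H ⊔ Subgroup.center G))) with mul_comm := hcommB }
  intro hnorm2
  letI := hnorm2
  intro hcommQ
  letI instQ : CommGroup ((commutator G) ⧸
      ((⁅H, (⊤ : Subgroup G)⁆).subgroupOf (commutator G))) :=
    { (inferInstance : Group _) with mul_comm := hcommQ }
  haveI hHn : H.Normal := normal_of_commutator_le' H hH
  haveI hKn : (⁅H, (⊤ : Subgroup G)⁆).Normal := Subgroup.commutator_normal H ⊤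
  have cmem : ∀ a b : G, ⁅a, b⁆ ∈ commutator G := fun a b =>
    Subgroup.commutator_mem_commutator (Subgroup.mem_top a) (Subgroup.mem_top b)
  -- the basic commutator class map
  let cc : G → G →
      (commutator G) ⧸ ((⁅H, (⊤ : Subgroup G)⁆).subgroupOf (commutator G)) :=
    fun a b => QuotientGroup.mk ⟨⁅a, b⁆, cmem a b⟩
  have cc_mul_left : ∀ a₁ a₂ b : G, cc (a₁ * a₂) b = cc a₁ b * cc a₂ b := by
    intro a₁ a₂ b
    have hmem : ⁅⁅a₂, b⁆, a₁⁆ ∈ ⁅H, (⊤ : Subgroup G)⁆ :=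
      Subgroup.commutator_mem_commutator (hH (cmem a₂ b)) (Subgroup.mem_top a₁)
    have hconj : (⁅a₁, b⁆⁻¹ * ⁅a₂, b⁆⁻¹) * ⁅⁅a₂, b⁆, a₁⁆ * (⁅a₁, b⁆⁻¹ * ⁅a₂, b⁆⁻¹)⁻¹
        ∈ ⁅H, (⊤ : Subgroup G)⁆ := hKn.conj_mem _ hmem _
    have key : ⁅a₁ * a₂, b⁆⁻¹ * (⁅a₂, b⁆ * ⁅a₁, b⁆)
        = (⁅a₁, b⁆⁻¹ * ⁅a₂, b⁆⁻¹) * ⁅⁅a₂, b⁆, a₁⁆ * (⁅a₁, b⁆⁻¹ * ⁅a₂, b⁆⁻¹)⁻¹ := by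
      simp only [commutatorElement_def]; group
    have h1 : cc (a₁ * a₂) b = cc a₂ b * cc a₁ b := by
      show QuotientGroup.mk _ = QuotientGroup.mk _ * QuotientGroup.mk _
      rw [← QuotientGroup.mk_mul, QuotientGroup.eq, Subgroup.mem_subgroupOf]
      show ⁅a₁ * a₂, b⁆⁻¹ * (⁅a₂, b⁆ * ⁅a₁, b⁆) ∈ ⁅H, (⊤ : Subgroup G)⁆
      rw [key]
      exact hconj
    rw [h1, mul_comm]
  have cc_swap : ∀ a b : G, cc b a = (cc a b)⁻¹ := by
    intro a b
    have h : cc a b * cc b a = 1 := by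
      show QuotientGroup.mk _ * QuotientGroup.mk _ = 1
      rw [← QuotientGroup.mk_mul]
      have : (⟨⁅a, b⁆, cmem a b⟩ : commutator G) * ⟨⁅b, a⁆, cmem b a⟩ = 1 := by
        apply Subtype.ext
        show ⁅a, b⁆ * ⁅b, a⁆ = 1
        simp only [commutatorElement_def]; group
      rw [this, QuotientGroup.mk_one]
    exact eq_inv_of_mul_eq_one_right h
  have cc_mul_right : ∀ a b₁ b₂ : G, cc a (b₁ * b₂) = cc a b₁ * cc a b₂ := by
    intro a b₁ b₂
    rw [cc_swap (b₁ * b₂) a, cc_mul_left b₁ b₂ a, mul_inv, ← cc_swap b₁ a, ← cc_swap b₂ a]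
  have cc_H : ∀ b : G, ∀ h ∈ H, cc h b = 1 := by
    intro b h hh
    apply (QuotientGroup.eq_one_iff _).mpr
    rw [Subgroup.mem_subgroupOf]
    exact Subgroup.commutator_mem_commutator hh (Subgroup.mem_top b)
  have cc_Z : ∀ b : G, ∀ z ∈ Subgroup.center G, cc z b = 1 := by
    intro b z hz
    have h1 : ⁅z, b⁆ = 1 := by
      rw [commutatorElement_eq_one_iff_mul_comm]
      exact (Subgroup.mem_center_iff.mp hz b).symm
    apply (QuotientGroup.eq_one_iff _).mpr
    rw [Subgroup.mem_subgroupOf]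
    show ⁅z, b⁆ ∈ ⁅H, (⊤ : Subgroup G)⁆
    rw [h1]
    exact Subgroup.one_mem _
  have ccN : ∀ b : G, ∀ n ∈ H ⊔ Subgroup.center G, cc n b = 1 := by
    intro b
    have hle : H ⊔ Subgroup.center G ≤ (MonoidHom.mk' (fun a => cc a b)
        (fun a₁ a₂ => cc_mul_left a₁ a₂ b)).ker :=
      sup_le (fun h hh => MonoidHom.mem_ker.mpr (cc_H b h hh))
        (fun z hz => MonoidHom.mem_ker.mpr (cc_Z b z hz))
    intro n hn
    exact MonoidHom.mem_ker.mp (hle hn)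
  -- first lift
  let L : G → (G ⧸ (H ⊔ Subgroup.center G)) →*
      (commutator G) ⧸ ((⁅H, (⊤ : Subgroup G)⁆).subgroupOf (commutator G)) :=
    fun b => QuotientGroup.lift (H ⊔ Subgroup.center G)
      (MonoidHom.mk' (fun a => cc a b) (fun a₁ a₂ => cc_mul_left a₁ a₂ b))
      (fun n hn => MonoidHom.mem_ker.mpr (ccN b n hn))
  have L_mk : ∀ a b : G, L b (QuotientGroup.mk a) = cc a b := fun a b => rfl
  -- second lift
  let M : G →* ((G ⧸ (H ⊔ Subgroup.center G)) →*
      (commutator G) ⧸ ((⁅H, (⊤ : Subgroup G)⁆).subgroupOf (commutator G))) :=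
    MonoidHom.mk' L (by
      intro b₁ b₂
      ext x
      show cc x (b₁ * b₂) = (L b₁ * L b₂) (QuotientGroup.mk x : G ⧸ (H ⊔ Subgroup.center G))
      rw [MonoidHom.mul_apply, L_mk, L_mk, cc_mul_right])
  let Φ : (G ⧸ (H ⊔ Subgroup.center G)) →* ((G ⧸ (H ⊔ Subgroup.center G)) →*
      (commutator G) ⧸ ((⁅H, (⊤ : Subgroup G)⁆).subgroupOf (commutator G))) :=
    QuotientGroup.lift (H ⊔ Subgroup.center G) M (by
      intro n hn
      rw [MonoidHom.mem_ker]
      ext x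
      show cc x n = (1 : _ →* _) (QuotientGroup.mk x : G ⧸ (H ⊔ Subgroup.center G))
      rw [MonoidHom.one_apply, cc_swap n x, ccN x n hn, inv_one])
  have Φ_mk : ∀ a b : G, Φ (QuotientGroup.mk b) (QuotientGroup.mk a) = cc a b :=
    fun a b => rfl
  have Φ_self : ∀ x, Φ x x = 1 := by
    intro x
    refine QuotientGroup.induction_on x ?_
    intro a
    rw [Φ_mk a a]
    apply (QuotientGroup.eq_one_iff _).mpr
    rw [Subgroup.mem_subgroupOf]
    show ⁅a, a⁆ ∈ ⁅H, (⊤ : Subgroup G)⁆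
    rw [commutatorElement_self]
    exact Subgroup.one_mem _
  have hΦpow : ∀ (c : ℤ) (x y : G ⧸ (H ⊔ Subgroup.center G)),
      Φ (x ^ c) y = (Φ x y) ^ c := by
    intro c x y
    rw [map_zpow]
    rfl
  -- the alternating map
  let bmap : MultilinearMap ℤ
      (fun _ : Fin 2 => Additive (G ⧸ (H ⊔ Subgroup.center G)))
      (Additive ((commutator G) ⧸ ((⁅H, (⊤ : Subgroup G)⁆).subgroupOf (commutator G)))) :=
    { toFun := fun v => Additive.ofMul (Φ (Additive.toMul (v 1)) (Additive.toMul (v 0)))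
      map_update_add' := by
        intro _ m i x y
        fin_cases i
        · have e1 : ∀ z, Function.update m (0 : Fin 2) z 1 = m 1 := fun z =>
            Function.update_of_ne (Fin.ne_of_val_ne (by decide)) _ _
          simp only [Fin.zero_eta, Function.update_self, e1, toMul_add, map_mul, ofMul_mul]
        · have e0 : ∀ z, Function.update m (1 : Fin 2) z 0 = m 0 := fun z =>
            Function.update_of_ne (Fin.ne_of_val_ne (by decide)) _ _
          simp only [Fin.mk_one, Function.update_self, e0, toMul_add, map_mul,
            MonoidHom.mul_apply, ofMul_mul]
      map_update_smul' := by
        intro _ m i c x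
        fin_cases i
        · have e1 : ∀ z, Function.update m (0 : Fin 2) z 1 = m 1 := fun z =>
            Function.update_of_ne (Fin.ne_of_val_ne (by decide)) _ _
          simp only [Fin.zero_eta, Function.update_self, e1, toMul_zsmul, map_zpow,
            ofMul_zpow]
        · have e0 : ∀ z, Function.update m (1 : Fin 2) z 0 = m 0 := fun z =>
            Function.update_of_ne (Fin.ne_of_val_ne (by decide)) _ _
          simp only [Fin.mk_one, Function.update_self, e0, toMul_zsmul, hΦpow, ofMul_zpow] }
  let alt : (Additive (G ⧸ (H ⊔ Subgroup.center G))) [⋀^Fin 2]→ₗ[ℤ]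
      (Additive ((commutator G) ⧸ ((⁅H, (⊤ : Subgroup G)⁆).subgroupOf (commutator G)))) :=
    { bmap with
      map_eq_zero_of_eq' := by
        intro v i j hv hij
        have h01 : v 0 = v 1 := by
          fin_cases i <;> fin_cases j <;> first | exact absurd rfl hij | exact hv | exact hv.symm
        show Additive.ofMul (Φ (Additive.toMul (v 1)) (Additive.toMul (v 0))) = 0
        rw [← h01, Φ_self]
        rfl }
  let fam : ∀ i : ℕ, (Additive (G ⧸ (H ⊔ Subgroup.center G))) [⋀^Fin i]→ₗ[ℤ]
      (Additive ((commutator G) ⧸ ((⁅H, (⊤ : Subgroup G)⁆).subgroupOf (commutator G)))) :=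
    fun i => match i with
    | 2 => alt
    | _ => 0
  let f : (⋀[ℤ]^2 (Additive (G ⧸ (H ⊔ Subgroup.center G)))) →ₗ[ℤ]
      (Additive ((commutator G) ⧸ ((⁅H, (⊤ : Subgroup G)⁆).subgroupOf (commutator G)))) :=
    (ExteriorAlgebra.liftAlternating fam).comp
      (Submodule.subtype (⋀[ℤ]^2 (Additive (G ⧸ (H ⊔ Subgroup.center G)))))
  have hmap : ∀ (a b : G) (hab : ⁅a, b⁆ ∈ commutator G),
      f ⟨ExteriorAlgebra.ιMulti ℤ 2
            ![Additive.ofMul (QuotientGroup.mk a), Additive.ofMul (QuotientGroup.mk b)],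
          ExteriorAlgebra.ιMulti_range ℤ 2 (Set.mem_range_self _)⟩
        = Additive.ofMul (QuotientGroup.mk (⟨⁅a, b⁆, hab⟩ : commutator G)) := by
    intro a b hab
    show (ExteriorAlgebra.liftAlternating fam)
      (ExteriorAlgebra.ιMulti ℤ 2
        ![Additive.ofMul (QuotientGroup.mk a), Additive.ofMul (QuotientGroup.mk b)]) = _
    rw [ExteriorAlgebra.liftAlternating_apply_ιMulti]
    have hfam : fam 2 = alt := rfl
    rw [hfam]
    show Additive.ofMul (Φ (Additive.toMul
        (![Additive.ofMul (QuotientGroup.mk a), Additive.ofMul (QuotientGroup.mk b)] 1))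
        (Additive.toMul
        (![Additive.ofMul (QuotientGroup.mk a), Additive.ofMul (QuotientGroup.mk b)] 0))) = _
    simp only [Matrix.cons_val_one, Matrix.head_cons, Matrix.cons_val_zero, toMul_ofMul]
    exact congrArg Additive.ofMul (Φ_mk a b)
  refine ⟨f, ?_, hmap⟩
  -- surjectivity
  have hr : ∀ (g : G), g ∈ Subgroup.closure (commutatorSet G) →
      ∀ (hg' : g ∈ commutator G),
      Additive.ofMul (QuotientGroup.mk (⟨g, hg'⟩ : commutator G)) ∈ LinearMap.range f := by
    intro g hg
    induction hg using Subgroup.closure_induction with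
    | mem x hx =>
      intro hg'
      obtain ⟨a, b, rfl⟩ := hx
      exact ⟨_, hmap a b hg'⟩
    | one =>
      intro hg'
      have h0 : Additive.ofMul (QuotientGroup.mk (⟨1, hg'⟩ : commutator G)) =
          (0 : Additive ((commutator G) ⧸ ((⁅H, (⊤ : Subgroup G)⁆).subgroupOf (commutator G)))) := by
        have h1 : (⟨1, hg'⟩ : commutator G) = 1 := rfl
        rw [h1, QuotientGroup.mk_one]
        rfl
      rw [h0]
      exact Submodule.zero_mem _
    | mul x y hx hy ihx ihy =>
      intro hg'
      have hx' : x ∈ commutator G := (commutator_eq_closure G).symm ▸ hx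
      have hy' : y ∈ commutator G := (commutator_eq_closure G).symm ▸ hy
      have heq : Additive.ofMul (QuotientGroup.mk (⟨x * y, hg'⟩ : commutator G) : (commutator G) ⧸ ((⁅H, (⊤ : Subgroup G)⁆).subgroupOf (commutator G)))
          = Additive.ofMul (QuotientGroup.mk (⟨x, hx'⟩ : commutator G))
            + Additive.ofMul (QuotientGroup.mk (⟨y, hy'⟩ : commutator G)) := by
        rw [← ofMul_mul, ← QuotientGroup.mk_mul]
        rfl
      rw [heq]
      exact Submodule.add_mem _ (ihx hx') (ihy hy')
    | inv x hx ihx =>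
      intro hg'
      have hx' : x ∈ commutator G := (commutator_eq_closure G).symm ▸ hx
      have heq : Additive.ofMul (QuotientGroup.mk (⟨x⁻¹, hg'⟩ : commutator G) : (commutator G) ⧸ ((⁅H, (⊤ : Subgroup G)⁆).subgroupOf (commutator G)))
          = - Additive.ofMul (QuotientGroup.mk (⟨x, hx'⟩ : commutator G)) := by
        rw [← ofMul_inv, ← QuotientGroup.mk_inv]
        rfl
      rw [heq]
      exact Submodule.neg_mem _ (ihx hx')
  intro y
  obtain ⟨x, hx⟩ := QuotientGroup.mk_surjective (Additive.toMul y)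
  obtain ⟨g, hg⟩ := x
  obtain ⟨w, hw⟩ := hr g ((commutator_eq_closure G) ▸ hg) hg
  refine ⟨w, ?_⟩
  rw [hw]
  rw [hx]
  rfl

end Aux

/-- Let `G` be a group and `H` a subgroup with `[G,G] ≤ H`, and let
`B = G/(H·Z(G))`.  Then `[H,G]` is a normal subgroup of `[G,G]` with abelian quotient, and
there is a surjective group homomorphism `B ∧ B → [G,G]/[H,G]` sending
`a∧b ↦ [a,b] mod [H,G]`.  (The quotients are abelian, so the exterior square is taken of
the corresponding `ℤ`-modules; the normality and commutativity facts used to form the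
quotient groups are recorded as the—automatically satisfiable—hypotheses of part (2).) -/
theorem exterior_square_epi_onto_commutator_quotient
    {G : Type} [Group G] (H : Subgroup G) (hH : commutator G ≤ H) :
    -- (1) `[H,G]` is a normal subgroup of `[G,G]` with abelian quotient
    (∀ g ∈ commutator G, ∀ x ∈ ⁅H, (⊤ : Subgroup G)⁆,
        g * x * g⁻¹ ∈ ⁅H, (⊤ : Subgroup G)⁆) ∧
    (∀ a ∈ commutator G, ∀ b ∈ commutator G, ⁅a, b⁆ ∈ ⁅H, (⊤ : Subgroup G)⁆) ∧
    -- (2) the surjection `B ∧ B → [G,G]/[H,G]`, `a ∧ b ↦ [a,b]`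
    (∀ (hN : (H ⊔ Subgroup.center G).Normal),
      letI := hN
      ∀ (hcommB : ∀ x y : G ⧸ (H ⊔ Subgroup.center G), x * y = y * x),
      letI : CommGroup (G ⧸ (H ⊔ Subgroup.center G)) :=
        { (inferInstance : Group (G ⧸ (H ⊔ Subgroup.center G))) with mul_comm := hcommB }
      ∀ (hnorm2 : ((⁅H, (⊤ : Subgroup G)⁆).subgroupOf (commutator G)).Normal),
      letI := hnorm2
      ∀ (hcommQ : ∀ x y : (commutator G) ⧸
          ((⁅H, (⊤ : Subgroup G)⁆).subgroupOf (commutator G)), x * y = y * x),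
      letI : CommGroup ((commutator G) ⧸
          ((⁅H, (⊤ : Subgroup G)⁆).subgroupOf (commutator G))) :=
        { (inferInstance : Group _) with mul_comm := hcommQ }
      ∃ f : (⋀[ℤ]^2 (Additive (G ⧸ (H ⊔ Subgroup.center G)))) →ₗ[ℤ]
          (Additive ((commutator G) ⧸ ((⁅H, (⊤ : Subgroup G)⁆).subgroupOf (commutator G)))),
        Function.Surjective f ∧
        ∀ (a b : G) (hab : ⁅a, b⁆ ∈ commutator G),
          f ⟨ExteriorAlgebra.ιMulti ℤ 2
                ![Additive.ofMul (QuotientGroup.mk a), Additive.ofMul (QuotientGroup.mk b)],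
              ExteriorAlgebra.ιMulti_range ℤ 2 (Set.mem_range_self _)⟩
            = Additive.ofMul (QuotientGroup.mk (⟨⁅a, b⁆, hab⟩ : commutator G))) := by
  haveI hHn : H.Normal := normal_of_commutator_le' H hH
  haveI hKn : (⁅H, (⊤ : Subgroup G)⁆).Normal := Subgroup.commutator_normal H ⊤
  refine ⟨?_, ?_, ?_⟩
  · intro g _ x hx
    exact hKn.conj_mem x hx g
  · intro a ha b _
    exact Subgroup.commutator_mem_commutator (hH ha) (Subgroup.mem_top b)
  · exact fun hN => aux_main H hH hN
end

section
/- Let E be a graded division ring (graded by a torsion-free abelian group) finite-dimensional over its center T, a graded field. If E is totally ramified over T (i.e., E_0 = T_0), then SK1(E) ≅ μ_n(T_0)/μ_e(T_0), where n = ind(E), e is the exponent of the finite abelian group Γ_E/Γ_T, and μ_k(T_0) denotes the group of k-th roots of unity in the field T_0. -/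
open scoped TensorProduct

universe u v

/-- A witness that `nrd` is the reduced norm of the (Azumaya) `R`-algebra `A` of constant
rank `n ^ 2`. -/
structure RedNormWitness (R : Type u) (A : Type v) [CommRing R] [Ring A] [Algebra R A]
    (n : ℕ) (nrd : A →* R) : Type (max (u + 1) (v + 1)) where
  S : Type v
  [commRing : CommRing S]
  [alg : Algebra R S]
  faithfullyFlat : Module.FaithfullyFlat R S
  equiv : (S ⊗[R] A) ≃ₐ[S] Matrix (Fin n) (Fin n) S
  compat : ∀ a : A, algebraMap R S (nrd a) = Matrix.det (equiv ((1 : S) ⊗ₜ[R] a))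

/-- `nrd` is the reduced norm of the `R`-algebra `A` (of degree `n`). -/
def IsReducedNorm (R : Type u) (A : Type v) [CommRing R] [Ring A] [Algebra R A]
    (n : ℕ) (nrd : A →* R) : Prop :=
  Nonempty (RedNormWitness R A n nrd)

/-- A graded division ring: every nonzero homogeneous element is a unit. -/
def IsGradedDivisionRing {Γ E : Type*} [AddCommGroup Γ] [Ring E]
    (𝒜 : Γ → AddSubgroup E) : Prop :=
  ∀ γ : Γ, ∀ a ∈ 𝒜 γ, a ≠ 0 → IsUnit a

/-- The reduced Whitehead group `SK₁` attached to a multiplicative map `nrd` (a reduced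
norm): the kernel of `nrd` on units modulo the commutator subgroup of the unit group. -/
def skOne {E R : Type*} [Monoid E] [CommMonoid R] (nrd : E →* R) : Type _ :=
  (Units.map nrd).ker ⧸ (commutator Eˣ).subgroupOf (Units.map nrd).ker

noncomputable instance {E R : Type*} [Monoid E] [CommMonoid R] (nrd : E →* R) :
    Group (skOne nrd) := by
  unfold skOne
  haveI := Subgroup.Normal.subgroupOf (H := commutator Eˣ)
    inferInstance ((Units.map nrd).ker)
  infer_instance


section OrderFun

variable {Γ : Type} [AddCommGroup Γ]

/-- On the subgroup generated by a finite set of a torsion-free abelian group, there is an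
additive injective function into a linear ordered abelian group. -/
theorem exists_orderfun (htf : ∀ g : Γ, g ≠ 0 → ¬IsOfFinAddOrder g) (s : Set Γ) (hs : s.Finite) :
    ∃ (W : Type) (_ : AddCommGroup W) (_ : LinearOrder W) (_ : IsOrderedAddMonoid W) (f : Γ → W),
      (∀ γ δ, γ ∈ AddSubgroup.closure s → δ ∈ AddSubgroup.closure s →
        f (γ + δ) = f γ + f δ) ∧
      (∀ γ δ, γ ∈ AddSubgroup.closure s → δ ∈ AddSubgroup.closure s →
        f γ = f δ → γ = δ) := by
  classical
  set H : AddSubgroup Γ := AddSubgroup.closure s with hH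
  have hfg : H.FG := (AddSubgroup.fg_iff H).mpr ⟨s, rfl, hs⟩
  haveI : AddGroup.FG ↥H := (AddGroup.fg_iff_addSubgroup_fg H).mpr hfg
  haveI : Module.Finite ℤ ↥H := Module.Finite.iff_addGroup_fg.mpr ‹_›
  haveI : NoZeroSMulDivisors ℤ Γ :=
    haveI : IsAddTorsionFree Γ := isAddTorsionFree_iff_not_isOfFinAddOrder.mpr (fun g hg => htf g hg)
    IsAddTorsionFree.to_noZeroSMulDivisors_int
  haveI : NoZeroSMulDivisors ℤ ↥H := by
    constructor
    intro c x hcx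
    have : c • (x : Γ) = 0 := by
      have := congrArg (Subtype.val) hcx
      simpa using this
    rcases smul_eq_zero.mp this with h | h
    · exact Or.inl h
    · exact Or.inr (by ext; simpa using h)
  haveI : Module.Free ℤ ↥H := Module.free_of_finite_type_torsion_free'
  set ι := Module.Free.ChooseBasisIndex ℤ ↥H
  letI : LinearOrder ι := by
    haveI := (WellOrderingRel.isWellOrder (α := ι))
    exact linearOrderOfSTO WellOrderingRel
  let b := Module.Free.chooseBasis ℤ ↥H
  refine ⟨Lex (ι →₀ ℤ), inferInstance, inferInstance, inferInstance, fun γ =>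
    if h : γ ∈ H then toLex (b.repr ⟨γ, h⟩) else 0, ?_, ?_⟩
  · intro γ δ hγ hδ
    simp only []
    rw [dif_pos hγ, dif_pos hδ, dif_pos (add_mem hγ hδ)]
    have : (⟨γ + δ, add_mem hγ hδ⟩ : ↥H) = ⟨γ, hγ⟩ + ⟨δ, hδ⟩ := rfl
    rw [this, map_add]
    rfl
  · intro γ δ hγ hδ hf
    simp only [] at hf
    rw [dif_pos hγ, dif_pos hδ] at hf
    have := b.repr.injective (toLex.injective hf)
    simpa [Subtype.ext_iff] using this

end OrderFun


section Graded

variable {Γ : Type} [AddCommGroup Γ] [DecidableEq Γ]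
variable {E : Type} [Ring E] (𝒜 : Γ → AddSubgroup E) [GradedRing 𝒜]
variable [∀ (i : Γ) (x : 𝒜 i), Decidable (x ≠ 0)]

open DirectSum

theorem key_comp (hgd : IsGradedDivisionRing 𝒜) {W : Type} [AddCommGroup W] [LinearOrder W] [IsOrderedAddMonoid W]
    (f : Γ → W) {x y : E} {A B : Γ}
    (hA : A ∈ DFinsupp.support (decompose 𝒜 x)) (hB : B ∈ DFinsupp.support (decompose 𝒜 y))
    (hadd : ∀ γ ∈ DFinsupp.support (decompose 𝒜 x), ∀ δ ∈ DFinsupp.support (decompose 𝒜 y),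
      f (γ + δ) = f γ + f δ)
    (hinjx : ∀ γ ∈ DFinsupp.support (decompose 𝒜 x), f γ = f A → γ = A)
    (hinjy : ∀ δ ∈ DFinsupp.support (decompose 𝒜 y), f δ = f B → δ = B)
    (hmaxx : ∀ γ ∈ DFinsupp.support (decompose 𝒜 x), f γ ≤ f A)
    (hmaxy : ∀ δ ∈ DFinsupp.support (decompose 𝒜 y), f δ ≤ f B) :
    ((decompose 𝒜 (x * y)) (A + B) : E) = (decompose 𝒜 x A : E) * (decompose 𝒜 y B : E) ∧
      ((decompose 𝒜 (x * y)) (A + B) : E) ≠ 0 := by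
  classical
  have hfilter : Finset.filter (fun ij : Γ × Γ => ij.1 + ij.2 = A + B)
      (DFinsupp.support (decompose 𝒜 x) ×ˢ DFinsupp.support (decompose 𝒜 y)) = {(A, B)} := by
    ext ⟨γ, δ⟩
    simp only [Finset.mem_filter, Finset.mem_product, Finset.mem_singleton, Prod.mk.injEq]
    constructor
    · rintro ⟨⟨hγ, hδ⟩, hsum⟩
      have h1 : f γ + f δ = f A + f B := by
        rw [← hadd γ hγ δ hδ, hsum, hadd A hA B hB]
      have hγA : f γ = f A := by
        have h2 : f A ≤ f γ := by
          have : f A + f B ≤ f γ + f B := by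
            calc f A + f B = f γ + f δ := h1.symm
            _ ≤ f γ + f B := add_le_add_right (hmaxy δ hδ) _
          exact le_of_add_le_add_right this
        exact le_antisymm (hmaxx γ hγ) h2
      have hδB : f δ = f B := by
        have := h1
        rw [hγA] at this
        exact add_left_cancel this
      exact ⟨hinjx γ hγ hγA, hinjy δ hδ hδB⟩
    · rintro ⟨rfl, rfl⟩
      exact ⟨⟨hA, hB⟩, rfl⟩
  have hmul : ((decompose 𝒜 (x * y)) (A + B) : E)
      = (decompose 𝒜 x A : E) * (decompose 𝒜 y B : E) := by
    rw [DirectSum.decompose_mul, DirectSum.coe_mul_apply, hfilter, Finset.sum_singleton]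
  refine ⟨hmul, ?_⟩
  rw [hmul]
  have hxA : ((decompose 𝒜 x A : E)) ≠ 0 := by
    intro h
    apply DFinsupp.mem_support_iff.mp hA
    exact Subtype.ext h
  have hyB : ((decompose 𝒜 y B : E)) ≠ 0 := by
    intro h
    apply DFinsupp.mem_support_iff.mp hB
    exact Subtype.ext h
  have hu : IsUnit ((decompose 𝒜 x A : E)) := hgd A _ (SetLike.coe_mem _) hxA
  intro h
  exact hyB ((hu.mul_right_eq_zero).mp h)

end Graded

section Graded2

variable {Γ : Type} [AddCommGroup Γ] [DecidableEq Γ]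
variable {E : Type} [Ring E] (𝒜 : Γ → AddSubgroup E) [GradedRing 𝒜]
variable [∀ (i : Γ) (x : 𝒜 i), Decidable (x ≠ 0)]

open DirectSum

theorem support_nonempty {x : E} (hx : x ≠ 0) :
    (DFinsupp.support (decompose 𝒜 x)).Nonempty := by
  rw [Finset.nonempty_iff_ne_empty]
  intro h
  apply hx
  conv_lhs => rw [← DirectSum.sum_support_decompose 𝒜 x]
  rw [h, Finset.sum_empty]

theorem graded_mul_ne_zero (htf : ∀ g : Γ, g ≠ 0 → ¬IsOfFinAddOrder g) (hgd : IsGradedDivisionRing 𝒜)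
    {x y : E} (hx : x ≠ 0) (hy : y ≠ 0) : x * y ≠ 0 := by
  classical
  obtain ⟨W, instW, instW2, instW3, f, hadd, hinj⟩ := exists_orderfun htf
    ((DFinsupp.support (decompose 𝒜 x) : Set Γ) ∪ (DFinsupp.support (decompose 𝒜 y) : Set Γ))
    (by simp [Set.Finite.union])
  set s : Set Γ := (DFinsupp.support (decompose 𝒜 x) : Set Γ) ∪
    (DFinsupp.support (decompose 𝒜 y) : Set Γ)
  have hsx : ∀ γ ∈ DFinsupp.support (decompose 𝒜 x), γ ∈ AddSubgroup.closure s :=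
    fun γ hγ => AddSubgroup.subset_closure (Set.mem_union_left _ (by simpa using hγ))
  have hsy : ∀ δ ∈ DFinsupp.support (decompose 𝒜 y), δ ∈ AddSubgroup.closure s :=
    fun δ hδ => AddSubgroup.subset_closure (Set.mem_union_right _ (by simpa using hδ))
  obtain ⟨A, hA, hmaxx⟩ := Finset.exists_max_image _ f (support_nonempty 𝒜 hx)
  obtain ⟨B, hB, hmaxy⟩ := Finset.exists_max_image _ f (support_nonempty 𝒜 hy)
  have := key_comp 𝒜 hgd f hA hB
    (fun γ hγ δ hδ => hadd γ δ (hsx γ hγ) (hsy δ hδ))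
    (fun γ hγ hfγ => hinj γ A (hsx γ hγ) (hsx A hA) hfγ)
    (fun δ hδ hfδ => hinj δ B (hsy δ hδ) (hsy B hB) hfδ)
    hmaxx hmaxy
  intro h
  apply this.2
  rw [h]
  simp

/-- Every unit of a graded division ring over a torsion-free grading group is homogeneous. -/
theorem unit_homogeneous (htf : ∀ g : Γ, g ≠ 0 → ¬IsOfFinAddOrder g) (hgd : IsGradedDivisionRing 𝒜)
    [Nontrivial E] (u : Eˣ) : ∃ γ : Γ, (↑u : E) ∈ 𝒜 γ := by
  classical
  set x : E := ↑u
  set y : E := ↑u⁻¹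
  have hx : x ≠ 0 := Units.ne_zero u
  have hy : y ≠ 0 := Units.ne_zero u⁻¹
  obtain ⟨W, instW, instW2, instW3, f, hadd, hinj⟩ := exists_orderfun htf
    ((DFinsupp.support (decompose 𝒜 x) : Set Γ) ∪ (DFinsupp.support (decompose 𝒜 y) : Set Γ))
    (by simp [Set.Finite.union])
  set s : Set Γ := (DFinsupp.support (decompose 𝒜 x) : Set Γ) ∪
    (DFinsupp.support (decompose 𝒜 y) : Set Γ)
  have hsx : ∀ γ ∈ DFinsupp.support (decompose 𝒜 x), γ ∈ AddSubgroup.closure s :=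
    fun γ hγ => AddSubgroup.subset_closure (Set.mem_union_left _ (by simpa using hγ))
  have hsy : ∀ δ ∈ DFinsupp.support (decompose 𝒜 y), δ ∈ AddSubgroup.closure s :=
    fun δ hδ => AddSubgroup.subset_closure (Set.mem_union_right _ (by simpa using hδ))
  obtain ⟨A, hA, hmaxx⟩ := Finset.exists_max_image _ f (support_nonempty 𝒜 hx)
  obtain ⟨B, hB, hmaxy⟩ := Finset.exists_max_image _ f (support_nonempty 𝒜 hy)
  obtain ⟨a, ha, hminx⟩ := Finset.exists_min_image _ f (support_nonempty 𝒜 hx)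
  obtain ⟨b, hb, hminy⟩ := Finset.exists_min_image _ f (support_nonempty 𝒜 hy)
  -- the product x*y = 1 is supported in degree 0
  have hone : ∀ γ : Γ, ((decompose 𝒜 (x * y)) γ : E) ≠ 0 → γ = 0 := by
    intro γ hγ
    have hxy : x * y = 1 := by simp [x, y]
    by_contra hne
    apply hγ
    rw [hxy, DirectSum.decompose_of_mem_ne 𝒜 SetLike.GradedOne.one_mem (Ne.symm hne)]
  -- max degrees
  have hmax := key_comp 𝒜 hgd f hA hB
    (fun γ hγ δ hδ => hadd γ δ (hsx γ hγ) (hsy δ hδ))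
    (fun γ hγ hfγ => hinj γ A (hsx γ hγ) (hsx A hA) hfγ)
    (fun δ hδ hfδ => hinj δ B (hsy δ hδ) (hsy B hB) hfδ)
    hmaxx hmaxy
  -- min degrees : apply with -f
  have hmin := key_comp 𝒜 hgd (fun γ => -(f γ)) ha hb
    (fun γ hγ δ hδ => by show -f (γ + δ) = -f γ + -f δ; rw [hadd γ δ (hsx γ hγ) (hsy δ hδ)]; abel)
    (fun γ hγ hfγ => hinj γ a (hsx γ hγ) (hsx a ha) (by simpa using hfγ))
    (fun δ hδ hfδ => hinj δ b (hsy δ hδ) (hsy b hb) (by simpa using hfδ))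
    (fun γ hγ => by simpa using hminx γ hγ)
    (fun δ hδ => by simpa using hminy δ hδ)
  have hAB : A + B = 0 := hone _ hmax.2
  have hab : a + b = 0 := hone _ hmin.2
  -- conclude f a = f A
  have h1 : f a + f b = f A + f B := by
    rw [← hadd a b (hsx a ha) (hsy b hb), ← hadd A B (hsx A hA) (hsy B hB), hab, hAB]
  have hfaA : f a = f A := by
    have h2 : f A ≤ f a := by
      have : f A + f B ≤ f a + f B := by
        calc f A + f B = f a + f b := h1.symm
        _ ≤ f a + f B := add_le_add_right (hmaxy b hb) _
      exact le_of_add_le_add_right this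
    exact le_antisymm (hmaxx a ha) h2
  -- every degree in the support of x equals a
  have hsupp : ∀ γ ∈ DFinsupp.support (decompose 𝒜 x), γ = a := by
    intro γ hγ
    apply hinj γ a (hsx γ hγ) (hsx a ha)
    exact le_antisymm (hfaA ▸ hmaxx γ hγ) (hminx γ hγ)
  refine ⟨a, ?_⟩
  have hsub : DFinsupp.support (decompose 𝒜 x) = {a} := by
    apply Finset.eq_singleton_iff_unique_mem.mpr
    exact ⟨ha, hsupp⟩
  have : x = ((decompose 𝒜 x) a : E) := by
    conv_lhs => rw [← DirectSum.sum_support_decompose 𝒜 x]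
    rw [hsub, Finset.sum_singleton]
  rw [this]
  exact SetLike.coe_mem _

end Graded2
section Nrd
variable {R : Type u} {A : Type v} [CommRing R] [Ring A] [Algebra R A]
  {n : ℕ} {nrd : A →* R}

theorem IsReducedNorm.n_pos (h : IsReducedNorm R A n nrd) [Nontrivial A] : 0 < n := by
  obtain ⟨w⟩ := h
  letI := w.commRing; letI := w.alg
  haveI := w.faithfullyFlat
  haveI : Nontrivial (w.S ⊗[R] A) := Module.FaithfullyFlat.lTensor_nontrivial R w.S A
  rcases Nat.eq_zero_or_pos n with hn | hn
  · exfalso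
    haveI : IsEmpty (Fin n) := by rw [hn]; exact Fin.isEmpty'
    haveI : Subsingleton (Matrix (Fin n) (Fin n) w.S) := by
      constructor; intro a b; funext i; exact isEmptyElim i
    haveI := w.equiv.toEquiv.subsingleton
    exact (not_subsingleton_iff_nontrivial.mpr ‹Nontrivial (w.S ⊗[R] A)›) ‹_›
  · exact hn

theorem IsReducedNorm.nrd_algebraMap (h : IsReducedNorm R A n nrd) (z : R) :
    nrd (algebraMap R A z) = z ^ n := by
  obtain ⟨w⟩ := h
  letI := w.commRing; letI := w.alg
  haveI := w.faithfullyFlat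
  -- `algebraMap R S` is injective
  have hinj0 : ∀ r : R, algebraMap R w.S r = 0 → r = 0 := by
    intro r hr
    have hzero : LinearMap.lTensor w.S (LinearMap.toSpanSingleton R R r) = 0 := by
      apply TensorProduct.ext'
      intro s x
      have : (LinearMap.toSpanSingleton R R r) x = x • r := rfl
      rw [LinearMap.lTensor_tmul, this]
      have h2 : s ⊗ₜ[R] (x • r) = ((x * r) • s) ⊗ₜ[R] (1 : R) := by
        rw [TensorProduct.smul_tmul]
        have : x • r = (x * r) • (1 : R) := by simp [smul_eq_mul]
        rw [this, TensorProduct.tmul_smul, TensorProduct.smul_tmul']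
      rw [h2]
      have : (x * r) • s = algebraMap R w.S x * algebraMap R w.S r * s := by
        rw [Algebra.smul_def, map_mul]
      rw [this, hr]
      simp
    have hf := (Module.FaithfullyFlat.zero_iff_lTensor_zero R w.S
      (LinearMap.toSpanSingleton R R r)).mpr hzero
    have : (LinearMap.toSpanSingleton R R r) 1 = 0 := by rw [hf]; rfl
    simpa using this
  have hinj : Function.Injective (algebraMap R w.S) := by
    intro r r' hrr
    have : algebraMap R w.S (r - r') = 0 := by rw [map_sub, hrr, sub_self]
    exact sub_eq_zero.mp (hinj0 _ this)
  apply hinj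
  rw [w.compat (algebraMap R A z)]
  have h1 : (1 : w.S) ⊗ₜ[R] (algebraMap R A z) =
      algebraMap w.S (w.S ⊗[R] A) (algebraMap R w.S z) := by
    rw [Algebra.TensorProduct.algebraMap_apply, Algebra.algebraMap_self_apply]
    rw [Algebra.algebraMap_eq_smul_one (R := R) (A := A) z, TensorProduct.tmul_smul,
      TensorProduct.smul_tmul', Algebra.algebraMap_eq_smul_one (R := R) (A := w.S) z]
  rw [h1, AlgEquiv.commutes]
  rw [Algebra.algebraMap_eq_smul_one (R := w.S) (A := Matrix (Fin n) (Fin n) w.S)]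
  rw [Matrix.det_smul, Matrix.det_one, mul_one, Fintype.card_fin, map_pow]

end Nrd

open scoped commutatorElement

/-- Let `E` be a graded division ring (graded by a torsion-free abelian
group), finite-dimensional over its center `T`.  If `E` is totally ramified over `T`
(`E₀ = T₀`), then `SK₁(E) ≅ μ_n(T₀)/μ_e(T₀)`, where `n = ind(E)` and `e` is the exponent
of `Γ_E/Γ_T`. -/
theorem skOne_iso_of_totally_ramified_graded_division_ring
    {Γ : Type} [AddCommGroup Γ] [DecidableEq Γ] (htf : ∀ g : Γ, g ≠ 0 → ¬IsOfFinAddOrder g)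
    {E : Type} [Ring E] (𝒜 : Γ → AddSubgroup E) [GradedRing 𝒜]
    (hgd : IsGradedDivisionRing 𝒜)
    [Module.Finite (Subring.center E) E]
    (n : ℕ) (hn : n * n = Module.finrank (Subring.center E) E)
    (nrd : E →* Subring.center E) (hnrd : IsReducedNorm (Subring.center E) E n nrd)
    -- `E` is totally ramified over `T`: the degree-0 component lies in the center
    (htr : ∀ x : E, x ∈ 𝒜 0 → x ∈ Subring.center E)
    -- `e` is the exponent of the (torsion) group `Γ_E/Γ_T`
    (e : ℕ) (he_pos : 0 < e)
    (he : ∀ γ : Γ, (∃ x ∈ 𝒜 γ, x ≠ 0) →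
      ∃ x ∈ 𝒜 (e • γ), x ≠ 0 ∧ x ∈ Subring.center E)
    (he_min : ∀ m : ℕ, 0 < m →
      (∀ γ : Γ, (∃ x ∈ 𝒜 γ, x ≠ 0) →
        ∃ x ∈ 𝒜 (m • γ), x ≠ 0 ∧ x ∈ Subring.center E) → e ∣ m)
    -- `μ_n(T₀)` and `μ_e(T₀)`: roots of unity in the degree-0 part of the center
    (Hn He : Subgroup (Subring.center E)ˣ)
    (hHn : ∀ u : (Subring.center E)ˣ, u ∈ Hn ↔
      (((u : Subring.center E) : E) ∈ 𝒜 0 ∧ u ^ n = 1))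
    (hHe : ∀ u : (Subring.center E)ˣ, u ∈ He ↔
      (((u : Subring.center E) : E) ∈ 𝒜 0 ∧ u ^ e = 1)) :
    Nonempty (skOne nrd ≃* (Hn ⧸ He.subgroupOf Hn)) := by
  by_cases hE : Nontrivial E
  case neg =>
    rw [not_nontrivial_iff_subsingleton] at hE
    haveI := hE
    haveI : Subsingleton Eˣ := ⟨fun a b => Units.ext (Subsingleton.elim _ _)⟩
    haveI : Subsingleton (Subring.center E) := ⟨fun a b => Subtype.ext (Subsingleton.elim _ _)⟩
    haveI : Subsingleton (Subring.center E)ˣ := ⟨fun a b => Units.ext (Subsingleton.elim _ _)⟩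
    have hsub : ∀ (G : Type) (_ : Group G) (N : Subgroup G) (_ : Subsingleton G),
        Subsingleton (G ⧸ N) := by
      intro G _ N _
      exact ⟨fun a b => Quotient.inductionOn₂ a b fun x y => by
        rw [Subsingleton.elim x y]⟩
    haveI : Subsingleton ((Units.map nrd).ker ⧸ (commutator Eˣ).subgroupOf (Units.map nrd).ker) :=
      hsub _ _ _ inferInstance
    haveI : Subsingleton (Hn ⧸ He.subgroupOf Hn) := hsub _ _ _ inferInstance
    haveI : Subsingleton (skOne nrd) := by unfold skOne; infer_instance
    exact ⟨{ toFun := fun _ => (1 : Hn ⧸ He.subgroupOf Hn),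
             invFun := fun _ => (1 : skOne nrd),
             left_inv := fun x => Subsingleton.elim _ _,
             right_inv := fun x => Subsingleton.elim _ _,
             map_mul' := fun _ _ => (Subsingleton.elim _ _ : (1 : Hn ⧸ He.subgroupOf Hn) = _) }⟩
  case pos =>
  haveI := hE
  classical
  -- basic graded structure
  have hhom : ∀ u : Eˣ, ∃ γ : Γ, (↑u : E) ∈ 𝒜 γ := unit_homogeneous 𝒜 htf hgd
  have hone0 : (1 : E) ∈ 𝒜 0 := SetLike.one_mem_graded 𝒜
  have hdegu : ∀ {x : E} {γ δ : Γ}, x ∈ 𝒜 γ → x ∈ 𝒜 δ → x ≠ 0 → γ = δ :=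
    fun h1 h2 h3 => DirectSum.degree_eq_of_mem_mem 𝒜 h1 h2 h3
  haveI : NoZeroDivisors E := by
    constructor
    intro a b hab
    by_contra h
    push_neg at h
    exact graded_mul_ne_zero 𝒜 htf hgd h.1 h.2 hab
  haveI : IsDomain E := NoZeroDivisors.to_isDomain E
  choose deg hdeg using hhom
  have hinvdeg : ∀ (u : Eˣ) (γ : Γ), (↑u : E) ∈ 𝒜 γ → (↑u⁻¹ : E) ∈ 𝒜 (-γ) := by
    intro u γ hu
    have h1 : (1 : E) ∈ 𝒜 (γ + deg u⁻¹) := by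
      have := SetLike.mul_mem_graded hu (hdeg u⁻¹)
      rwa [Units.mul_inv] at this
    have h2 : γ + deg u⁻¹ = 0 := hdegu h1 hone0 one_ne_zero
    have h3 : deg u⁻¹ = -γ := by
      have := neg_eq_of_add_eq_zero_right h2
      rw [← this]
    rw [← h3]
    exact hdeg u⁻¹
  -- center
  have hcinv : ∀ u : Eˣ, (↑u : E) ∈ Subring.center E → (↑u⁻¹ : E) ∈ Subring.center E := by
    intro u hu
    rw [Subring.mem_center_iff] at hu ⊢
    intro a
    calc a * ↑u⁻¹ = ↑u⁻¹ * (↑u * (a * ↑u⁻¹)) := by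
          rw [← mul_assoc, ← mul_assoc, Units.inv_mul, one_mul]
    _ = ↑u⁻¹ * ((a * ↑u⁻¹) * ↑u) := by rw [hu (a * ↑u⁻¹)]
    _ = ↑u⁻¹ * a := by rw [mul_assoc (a := a), Units.inv_mul, mul_one]
  have hcu : ∀ u : Eˣ, (↑u : E) ∈ Subring.center E →
      ∃ z : (Subring.center E)ˣ, Units.map (Subring.center E).subtype.toMonoidHom z = u := by
    intro u hu
    refine ⟨⟨⟨↑u, hu⟩, ⟨↑u⁻¹, hcinv u hu⟩, ?_, ?_⟩, ?_⟩
    · ext; simp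
    · ext; simp
    · ext; rfl
  set φ : (Subring.center E)ˣ →* Eˣ := Units.map (Subring.center E).subtype.toMonoidHom with hφ
  have hφinj : Function.Injective φ := by
    apply Units.map_injective
    intro a b hab
    exact Subtype.ext hab
  have hφcoe : ∀ z : (Subring.center E)ˣ, (↑(φ z) : E) = ((z : Subring.center E) : E) := fun z => rfl
  -- elements commuting with all units are central
  have hcomm_central : ∀ z : E, (∀ v : Eˣ, z * ↑v = ↑v * z) → z ∈ Subring.center E := by
    intro z hz
    rw [Subring.mem_center_iff]
    intro a
    have hcomp : ∀ γ : Γ, ((DirectSum.decompose 𝒜 a γ : E)) * z = z * (DirectSum.decompose 𝒜 a γ : E) := by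
      intro γ
      by_cases h : ((DirectSum.decompose 𝒜 a γ : E)) = 0
      · rw [h, zero_mul, mul_zero]
      · have hu := hgd γ _ (SetLike.coe_mem _) h
        have := hz hu.unit
        rw [IsUnit.unit_spec] at this
        exact this.symm
    conv_lhs => rw [← DirectSum.sum_support_decompose 𝒜 a]
    conv_rhs => rw [← DirectSum.sum_support_decompose 𝒜 a]
    rw [Finset.sum_mul, Finset.mul_sum]
    exact Finset.sum_congr rfl fun γ _ => hcomp γ
  -- the grade group of E and of the center
  set GE : AddSubgroup Γ :=
    { carrier := {γ | ∃ x ∈ 𝒜 γ, x ≠ 0}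
      zero_mem' := ⟨1, hone0, one_ne_zero⟩
      add_mem' := by
        rintro γ δ ⟨x, hx, hxne⟩ ⟨y, hy, hyne⟩
        exact ⟨x * y, SetLike.mul_mem_graded hx hy, graded_mul_ne_zero 𝒜 htf hgd hxne hyne⟩
      neg_mem' := by
        rintro γ ⟨x, hx, hxne⟩
        have hu := hgd γ x hx hxne
        have hux : (↑hu.unit : E) ∈ 𝒜 γ := by rw [IsUnit.unit_spec]; exact hx
        exact ⟨↑hu.unit⁻¹, hinvdeg hu.unit γ hux, Units.ne_zero _⟩ } with hGE
  set GT : AddSubgroup Γ :=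
    { carrier := {γ | ∃ x ∈ 𝒜 γ, x ≠ 0 ∧ x ∈ Subring.center E}
      zero_mem' := ⟨1, hone0, one_ne_zero, Subring.one_mem _⟩
      add_mem' := by
        rintro γ δ ⟨x, hx, hxne, hxc⟩ ⟨y, hy, hyne, hyc⟩
        exact ⟨x * y, SetLike.mul_mem_graded hx hy, graded_mul_ne_zero 𝒜 htf hgd hxne hyne,
          Subring.mul_mem _ hxc hyc⟩
      neg_mem' := by
        rintro γ ⟨x, hx, hxne, hxc⟩
        have hu := hgd γ x hx hxne
        have hux : (↑hu.unit : E) ∈ 𝒜 γ := by rw [IsUnit.unit_spec]; exact hx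
        have huc : (↑hu.unit : E) ∈ Subring.center E := by rw [IsUnit.unit_spec]; exact hxc
        exact ⟨↑hu.unit⁻¹, hinvdeg hu.unit γ hux, Units.ne_zero _, hcinv hu.unit huc⟩ } with hGT
  -- any homogeneous element of central degree is central
  have hGTcentral : ∀ γ ∈ GT, ∀ y ∈ 𝒜 γ, y ∈ Subring.center E := by
    rintro γ ⟨x, hx, hxne, hxc⟩ y hy
    by_cases hy0 : y = 0
    · rw [hy0]; exact Subring.zero_mem _
    have hu := hgd γ x hx hxne
    have hux : (↑hu.unit : E) ∈ 𝒜 γ := by rw [IsUnit.unit_spec]; exact hx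
    have huc : (↑hu.unit : E) ∈ Subring.center E := by rw [IsUnit.unit_spec]; exact hxc
    have h1 : y * ↑hu.unit⁻¹ ∈ 𝒜 0 := by
      have := SetLike.mul_mem_graded hy (hinvdeg hu.unit γ hux)
      rwa [add_neg_cancel] at this
    have h2 : y = (y * ↑hu.unit⁻¹) * ↑hu.unit := by
      rw [mul_assoc, Units.inv_mul, mul_one]
    rw [h2]
    exact Subring.mul_mem _ (htr _ h1) huc
  have hGTle : GT ≤ GE := by rintro γ ⟨x, h1, h2, _⟩; exact ⟨x, h1, h2⟩
  -- the quotient Γ_E / Γ_T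
  set N : AddSubgroup ↥GE := GT.addSubgroupOf GE with hN
  have hmemN : ∀ γ : ↥GE, γ ∈ N ↔ (γ : Γ) ∈ GT := fun γ => AddSubgroup.mem_addSubgroupOf
  have hGe : ∀ g : ↥GE ⧸ N, e • g = 0 := by
    intro g
    induction g using QuotientAddGroup.induction_on with
    | H γ =>
      rw [← QuotientAddGroup.mk_nsmul]
      rw [QuotientAddGroup.eq_zero_iff, hmemN]
      obtain ⟨x, hx, hxne, hxc⟩ := he (γ : Γ) γ.2
      exact ⟨x, hx, hxne, hxc⟩
  have hGmin : ∀ m : ℕ, 0 < m → (∀ g : ↥GE ⧸ N, m • g = 0) → e ∣ m := by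
    intro m hm hall
    apply he_min m hm
    intro γ hγ
    have := hall (QuotientAddGroup.mk (⟨γ, hγ⟩ : ↥GE))
    rw [← QuotientAddGroup.mk_nsmul, QuotientAddGroup.eq_zero_iff, hmemN] at this
    obtain ⟨x, hx, hxne, hxc⟩ := this
    exact ⟨x, hx, hxne, hxc⟩
  have hexp : AddMonoid.exponent (↥GE ⧸ N) = e := by
    have h1 : AddMonoid.exponent (↥GE ⧸ N) ∣ e := AddMonoid.exponent_dvd_of_forall_nsmul_eq_zero hGe
    have hexpne : AddMonoid.exponent (↥GE ⧸ N) ≠ 0 := by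
      intro h0
      rw [h0] at h1
      exact he_pos.ne' (Nat.eq_zero_of_zero_dvd h1)
    exact Nat.dvd_antisymm h1 (hGmin _ (Nat.pos_of_ne_zero hexpne)
      (fun g => AddMonoid.exponent_nsmul_eq_zero g))
  -- an element whose class has order exactly e
  obtain ⟨g₀, hg₀⟩ := AddMonoid.exists_addOrderOf_eq_exponent (G := ↥GE ⧸ N) ⟨e, he_pos, hGe⟩
  obtain ⟨γt, rfl⟩ := QuotientAddGroup.mk_surjective g₀
  rw [hexp] at hg₀
  have hord : ∀ k : ℕ, (k • (γt : Γ) ∈ GT) ↔ e ∣ k := by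
    intro k
    rw [← hg₀]
    rw [addOrderOf_dvd_iff_nsmul_eq_zero, ← QuotientAddGroup.mk_nsmul,
      QuotientAddGroup.eq_zero_iff, hmemN]
    rfl
  obtain ⟨x₀e, hx₀mem, hx₀ne⟩ := γt.2
  have hu₀ := hgd _ x₀e hx₀mem hx₀ne
  set u₀ : Eˣ := hu₀.unit with hu₀def
  have hu₀deg : (↑u₀ : E) ∈ 𝒜 (γt : Γ) := by rw [hu₀def, IsUnit.unit_spec]; exact hx₀mem
  -- commutator machinery
  have hUcent : ∀ z : Eˣ, (↑z : E) ∈ Subring.center E → ∀ w : Eˣ, z * w = w * z := by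
    intro z hz w
    apply Units.ext
    rw [Units.val_mul, Units.val_mul]
    exact ((Subring.mem_center_iff).mp hz ↑w).symm
  have hc0 : ∀ u v : Eˣ, (↑⁅u, v⁆ : E) ∈ 𝒜 0 := by
    intro u v
    have hm : (↑u : E) * ↑v * ↑u⁻¹ * ↑v⁻¹ ∈ 𝒜 (deg u + deg v + -(deg u) + -(deg v)) :=
      SetLike.mul_mem_graded (SetLike.mul_mem_graded
        (SetLike.mul_mem_graded (hdeg u) (hdeg v)) (hinvdeg u _ (hdeg u)))
        (hinvdeg v _ (hdeg v))
    have hdeq : deg u + deg v + -(deg u) + -(deg v) = 0 := by abel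
    rw [hdeq] at hm
    have : (↑⁅u, v⁆ : E) = (↑u : E) * ↑v * ↑u⁻¹ * ↑v⁻¹ := by
      rw [commutatorElement_def]
      simp [Units.val_mul]
    rwa [this]
  have hcR : ∀ u v : Eˣ, (↑⁅u, v⁆ : E) ∈ Subring.center E := fun u v => htr _ (hc0 u v)
  have hcmulr : ∀ u v w : Eˣ, ⁅u, v * w⁆ = ⁅u, v⁆ * ⁅u, w⁆ := by
    intro a b c
    have hc : ⁅a, c⁆ * b⁻¹ = b⁻¹ * ⁅a, c⁆ := hUcent _ (hcR a c) b⁻¹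
    calc ⁅a, b * c⁆ = a * b * a⁻¹ * (⁅a, c⁆ * b⁻¹) := by
          rw [commutatorElement_def, commutatorElement_def]; group
    _ = a * b * a⁻¹ * (b⁻¹ * ⁅a, c⁆) := by rw [hc]
    _ = ⁅a, b⁆ * ⁅a, c⁆ := by rw [commutatorElement_def]; group
  have hcmull : ∀ u v w : Eˣ, ⁅u * v, w⁆ = ⁅u, w⁆ * ⁅v, w⁆ := by
    intro a b c
    have hc : ⁅b, c⁆ * a = a * ⁅b, c⁆ := hUcent _ (hcR b c) a
    calc ⁅a * b, c⁆ = a * ⁅b, c⁆ * a⁻¹ * ⁅a, c⁆ := by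
          rw [commutatorElement_def, commutatorElement_def, commutatorElement_def]; group
    _ = ⁅b, c⁆ * a * a⁻¹ * ⁅a, c⁆ := by rw [hc]
    _ = ⁅b, c⁆ * ⁅a, c⁆ := by group
    _ = ⁅a, c⁆ * ⁅b, c⁆ := hUcent _ (hcR b c) _
  have hcpow : ∀ (u v : Eˣ) (k : ℕ), ⁅u ^ k, v⁆ = ⁅u, v⁆ ^ k := by
    intro u v k
    induction k with
    | zero => simp
    | succ k ih => rw [pow_succ, hcmull, ih, pow_succ]
  have hcone : ∀ u v : Eˣ, (↑u : E) ∈ Subring.center E → ⁅u, v⁆ = 1 := by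
    intro u v hu
    exact commutatorElement_eq_one_iff_commute.mpr (hUcent u hu v)
  have hcinv' : ∀ u v : Eˣ, ⁅u, v⁻¹⁆ = ⁅u, v⁆⁻¹ := by
    intro u v
    have h1 : ⁅u, v * v⁻¹⁆ = ⁅u, v⁆ * ⁅u, v⁻¹⁆ := hcmulr u v v⁻¹
    rw [mul_inv_cancel] at h1
    have : (1 : Eˣ) = ⁅u, v⁆ * ⁅u, v⁻¹⁆ := by rw [← h1]; simp
    exact (eq_inv_of_mul_eq_one_right this.symm)
  -- e-th powers of units are central
  have hpowcent : ∀ u : Eˣ, (↑(u ^ e) : E) ∈ Subring.center E := by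
    intro u
    have hmem : e • deg u ∈ GT := by
      obtain ⟨x, hx, hxne, hxc⟩ := he (deg u) ⟨↑u, hdeg u, Units.ne_zero u⟩
      exact ⟨x, hx, hxne, hxc⟩
    have : (↑(u ^ e) : E) ∈ 𝒜 (e • deg u) := by
      rw [Units.val_pow_eq_pow_val]
      exact SetLike.pow_mem_graded e (hdeg u)
    exact hGTcentral _ hmem _ this
  -- the commutator of any two units, as a central unit, lies in `He`
  have hval : ∀ u v : Eˣ, ∃ z : (Subring.center E)ˣ, φ z = ⁅u, v⁆ ∧ z ∈ He := by
    intro u v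
    obtain ⟨z, hz⟩ := hcu ⁅u, v⁆ (hcR u v)
    refine ⟨z, hz, ?_⟩
    rw [hHe]
    constructor
    · have : ((z : Subring.center E) : E) = (↑⁅u, v⁆ : E) := by rw [← hz]; rfl
      rw [this]; exact hc0 u v
    · apply hφinj
      rw [map_pow, hz, map_one, ← hcpow]
      exact hcone _ v (hpowcent u)
  choose cz hczφ hczHe using hval
  -- the subgroup of values of the commutator pairing against u₀
  set V : Subgroup (Subring.center E)ˣ :=
    { carrier := {z | ∃ v : Eˣ, z = cz u₀ v}
      one_mem' := by
        refine ⟨1, ?_⟩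
        apply hφinj
        rw [map_one, hczφ]
        simp
      mul_mem' := by
        rintro a b ⟨v, rfl⟩ ⟨w, rfl⟩
        refine ⟨v * w, ?_⟩
        apply hφinj
        rw [map_mul, hczφ, hczφ, hczφ, hcmulr]
      inv_mem' := by
        rintro a ⟨v, rfl⟩
        refine ⟨v⁻¹, ?_⟩
        apply hφinj
        rw [map_inv, hczφ, hczφ, hcinv'] } with hV
  -- the subgroup of e-th roots of unity in the center
  set μ : Subgroup (Subring.center E)ˣ :=
    { carrier := {z | z ^ e = 1}
      one_mem' := one_pow e
      mul_mem' := by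
        intro a b ha hb
        have : (a * b) ^ e = a ^ e * b ^ e := mul_pow a b e
        rw [Set.mem_setOf_eq] at ha hb ⊢
        rw [this, ha, hb, one_mul]
      inv_mem' := by
        intro a ha
        rw [Set.mem_setOf_eq] at ha ⊢
        rw [inv_pow, ha, inv_one] } with hμ
  have hHeμ : He = μ := by
    ext z
    rw [hHe]
    constructor
    · rintro ⟨-, h⟩; exact h
    · intro hz
      refine ⟨?_, hz⟩
      have hz1 : (φ z) ^ e = 1 := by rw [← map_pow, hz, map_one]
      have h1 : ((↑(φ z) : E)) ^ e = 1 := by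
        rw [← Units.val_pow_eq_pow_val, hz1, Units.val_one]
      have h2 : ((↑(φ z) : E)) ^ e ∈ 𝒜 (e • deg (φ z)) := SetLike.pow_mem_graded e (hdeg (φ z))
      rw [h1] at h2
      have h3 : e • deg (φ z) = 0 := hdegu h2 hone0 one_ne_zero
      have h4 : deg (φ z) = 0 := by
        by_contra hne
        exact htf _ hne (isOfFinAddOrder_iff_nsmul_eq_zero.mpr ⟨e, he_pos, h3⟩)
      have := hdeg (φ z)
      rw [h4] at this
      exact this
  haveI : IsDomain (Subring.center E) := inferInstance
  -- μ is finite
  have hroots : Set.Finite {z : (Subring.center E)ˣ | z ^ e = 1} := by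
    haveI : Nontrivial (Subring.center E) := inferInstance
    have hp : ((Polynomial.X : Polynomial (Subring.center E)) ^ e - Polynomial.C 1) ≠ 0 :=
      (Polynomial.monic_X_pow_sub_C (1 : Subring.center E) he_pos.ne').ne_zero
    have hsub : {z : (Subring.center E)ˣ | z ^ e = 1} ⊆
        ((↑) : (Subring.center E)ˣ → Subring.center E) ⁻¹'
          {x | ((Polynomial.X : Polynomial (Subring.center E)) ^ e - Polynomial.C 1).IsRoot x} := by
      intro z hz
      simp only [Set.mem_preimage, Set.mem_setOf_eq, Polynomial.IsRoot,
        Polynomial.eval_sub, Polynomial.eval_pow, Polynomial.eval_X, Polynomial.eval_C]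
      rw [← Units.val_pow_eq_pow_val, hz, Units.val_one, sub_self]
    exact Set.Finite.subset (Set.Finite.preimage (fun a b _ _ h => Units.ext h)
      (Polynomial.finite_setOf_isRoot hp)) hsub
  haveI hμfin : Finite ↥μ := by
    apply Set.Finite.to_subtype
    exact hroots
  haveI hVfin : Finite ↥V := by
    apply Set.Finite.to_subtype
    apply hroots.subset
    rintro z ⟨v, rfl⟩
    have := hczHe u₀ v
    rw [hHe] at this
    exact this.2
  have hVμ : V ≤ μ := by
    rintro z ⟨v, rfl⟩
    have := hczHe u₀ v
    rw [hHe] at this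
    exact this.2
  -- cardinality comparison: e ∣ card V ∣ card μ ∣ e
  have hcard1 : Nat.card ↥V ∣ Nat.card ↥μ := Subgroup.card_dvd_of_le hVμ
  have hcard2 : Nat.card ↥μ ∣ e := by
    haveI := subgroup_units_cyclic μ
    obtain ⟨g, hg⟩ := IsCyclic.exists_generator (α := ↥μ)
    have h1 : orderOf g = Nat.card ↥μ := orderOf_eq_card_of_forall_mem_zpowers hg
    have h2 : g ^ e = 1 := by
      apply Subtype.ext
      push_cast
      exact g.2
    rw [← h1]
    exact orderOf_dvd_of_pow_eq_one h2
  have hcard3 : e ∣ Nat.card ↥V := by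
    set d := Nat.card ↥V with hd
    have hpow1 : ∀ v : Eˣ, (cz u₀ v) ^ d = 1 := by
      intro v
      have : ((⟨cz u₀ v, ⟨v, rfl⟩⟩ : ↥V)) ^ d = 1 := pow_card_eq_one'
      have := congrArg (Subtype.val) this
      push_cast at this
      exact this
    have hcomm : ∀ v : Eˣ, (↑(u₀ ^ d) : E) * ↑v = ↑v * ↑(u₀ ^ d) := by
      intro v
      have h1 : ⁅u₀ ^ d, v⁆ = 1 := by
        rw [hcpow, ← hczφ u₀ v, ← map_pow, hpow1, map_one]
      have := commutatorElement_eq_one_iff_commute.mp h1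
      have := congrArg (Units.val) this.eq
      rwa [Units.val_mul, Units.val_mul] at this
    have hcent : (↑(u₀ ^ d) : E) ∈ Subring.center E := hcomm_central _ hcomm
    have hmem : d • (γt : Γ) ∈ GT := by
      refine ⟨↑(u₀ ^ d), ?_, Units.ne_zero _, hcent⟩
      rw [Units.val_pow_eq_pow_val]
      exact SetLike.pow_mem_graded d hu₀deg
    exact (hord d).mp hmem
  have hVμcard : Nat.card ↥μ ≤ Nat.card ↥V := by
    haveI : Nonempty ↥V := ⟨1⟩
    have hVpos : 0 < Nat.card ↥V := Nat.card_pos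
    calc Nat.card ↥μ ≤ e := Nat.le_of_dvd he_pos hcard2
    _ ≤ Nat.card ↥V := Nat.le_of_dvd hVpos hcard3
  have hVeq : V = μ := Subgroup.eq_of_le_of_card_ge hVμ hVμcard
  have hHeV : He = V := by rw [hHeμ, hVeq]
  -- reduced norm of central elements
  have hnpos : 0 < n := hnrd.n_pos
  have hnrdc : ∀ z : Subring.center E, nrd ((z : E)) = z ^ n := by
    intro z
    have h := hnrd.nrd_algebraMap z
    have h2 : (algebraMap (Subring.center E) E) z = (z : E) := rfl
    rwa [h2] at h
  set K : Subgroup Eˣ := (Units.map nrd).ker with hK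
  have hKer : ∀ u : Eˣ, u ∈ K ↔ nrd ↑u = 1 := by
    intro u
    rw [hK, MonoidHom.mem_ker]
    constructor
    · intro h
      have := congrArg Units.val h
      rwa [Units.coe_map, Units.val_one] at this
    · intro h
      apply Units.ext
      rw [Units.coe_map]
      rw [h, Units.val_one]
  have hKmap : Subgroup.map φ Hn = K := by
    apply le_antisymm
    · rintro u ⟨z, hz, rfl⟩
      replace hz := (hHn z).mp hz
      rw [hKer]
      have h1 : nrd ((z : Subring.center E) : E) = (z : Subring.center E) ^ n := hnrdc z
      have h2 : ((z : Subring.center E) : Subring.center E) ^ n = ((z ^ n : (Subring.center E)ˣ) : Subring.center E) :=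
        (Units.val_pow_eq_pow_val z n).symm
      rw [hφcoe, h1, h2, hz.2, Units.val_one]
    · intro u hu
      rw [hKer] at hu
      -- u^e is central
      obtain ⟨z, hz⟩ := hcu (u ^ e) (hpowcent u)
      have hz_pow : ((z : Subring.center E) : E) = (↑u : E) ^ e := by
        rw [← hφcoe, hz, Units.val_pow_eq_pow_val]
      have hzn : z ^ n = 1 := by
        apply Units.ext
        rw [Units.val_pow_eq_pow_val, Units.val_one]
        have h3 : nrd (((z : Subring.center E)) : E) = 1 := by
          rw [hz_pow, map_pow, hu, one_pow]
        rw [← hnrdc z]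
        exact h3
      have hu_en : (↑u : E) ^ (e * n) = 1 := by
        rw [pow_mul, ← hz_pow]
        have h4 : ((z : Subring.center E) : E) ^ n = (((z : Subring.center E) ^ n : Subring.center E) : E) := by
          push_cast
          rfl
        rw [h4, ← Units.val_pow_eq_pow_val, hzn, Units.val_one, OneMemClass.coe_one]
      have hdeg0 : deg u = 0 := by
        have h2 : (↑u : E) ^ (e * n) ∈ 𝒜 ((e * n) • deg u) := SetLike.pow_mem_graded _ (hdeg u)
        rw [hu_en] at h2
        have h3 := hdegu h2 hone0 one_ne_zero
        by_contra hne
        exact htf _ hne (isOfFinAddOrder_iff_nsmul_eq_zero.mpr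
          ⟨e * n, Nat.mul_pos he_pos hnpos, h3⟩)
      have hmem0 : (↑u : E) ∈ 𝒜 0 := by
        have := hdeg u
        rwa [hdeg0] at this
      obtain ⟨z', hz'⟩ := hcu u (htr _ hmem0)
      have hz'coe : ((z' : Subring.center E) : E) = (↑u : E) := by rw [← hφcoe, hz']
      refine ⟨z', (hHn z').mpr ⟨?_, ?_⟩, hz'⟩
      · rw [hz'coe]; exact hmem0
      · apply Units.ext
        rw [Units.val_pow_eq_pow_val, Units.val_one]
        have := hnrdc z'
        rw [hz'coe, hu] at this
        exact this.symm
  -- the commutator subgroup is the image of He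
  have hCmap : Subgroup.map φ He = commutator Eˣ := by
    apply le_antisymm
    · rintro u ⟨z, hz, rfl⟩
      have hz' : z ∈ V := by rw [← hHeV]; exact hz
      obtain ⟨v, rfl⟩ := hz'
      rw [hczφ, commutator_def]
      exact Subgroup.commutator_mem_commutator (Subgroup.mem_top _) (Subgroup.mem_top _)
    · rw [commutator_def, Subgroup.commutator_def, Subgroup.closure_le]
      rintro w ⟨g1, -, g2, -, rfl⟩
      refine ⟨cz g1 g2, ?_, hczφ g1 g2⟩
      exact hczHe g1 g2
  -- the commutator subgroup is contained in the kernel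
  have hCK : commutator Eˣ ≤ K := by
    rw [commutator_def, Subgroup.commutator_def, Subgroup.closure_le]
    rintro w ⟨g1, -, g2, -, rfl⟩
    have : (Units.map nrd) ⁅g1, g2⁆ = 1 := by
      rw [map_commutatorElement]
      exact commutatorElement_eq_one_iff_commute.mpr (mul_comm _ _)
    exact this
  have hHeHn : He ≤ Hn := by
    intro z hz
    have h1 : φ z ∈ K := hCK (by rw [← hCmap]; exact ⟨z, hz, rfl⟩)
    rw [← hKmap] at h1
    obtain ⟨w, hw, hwz⟩ := h1
    rwa [← hφinj hwz]
  -- assemble the isomorphism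
  haveI hNorm1 : ((commutator Eˣ).subgroupOf K).Normal :=
    Subgroup.Normal.subgroupOf inferInstance K
  let e₁ : ↥Hn ≃* ↥K :=
    (Subgroup.equivMapOfInjective Hn φ hφinj).trans (MulEquiv.subgroupCongr hKmap)
  have hecoe : ∀ y : ↥Hn, ((e₁ y : ↥K) : Eˣ) = φ ↑y := fun y => rfl
  have hmapeq : Subgroup.map (e₁ : ↥Hn →* ↥K) (He.subgroupOf Hn)
      = (commutator Eˣ).subgroupOf K := by
    ext x
    constructor
    · rintro ⟨y, hy, rfl⟩
      have hy' : (y : (Subring.center E)ˣ) ∈ He := hy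
      rw [Subgroup.mem_subgroupOf]
      show ((e₁ y : ↥K) : Eˣ) ∈ commutator Eˣ
      rw [hecoe, ← hCmap]
      exact ⟨↑y, hy', rfl⟩
    · intro hx
      rw [Subgroup.mem_subgroupOf] at hx
      rw [← hCmap] at hx
      obtain ⟨z, hz, hφz⟩ := hx
      refine ⟨⟨z, hHeHn hz⟩, ?_, ?_⟩
      · show (⟨z, hHeHn hz⟩ : ↥Hn) ∈ He.subgroupOf Hn
        rw [Subgroup.mem_subgroupOf]
        exact hz
      · apply Subtype.ext
        show ((e₁ ⟨z, hHeHn hz⟩ : ↥K) : Eˣ) = (x : Eˣ)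
        rw [hecoe]
        exact hφz
  exact ⟨(QuotientGroup.congr (He.subgroupOf Hn) ((commutator Eˣ).subgroupOf K) e₁ hmapeq).symm⟩
end

section
/- Let F ⊆ K be fields with [K:F] < ∞, let v be a henselian valuation on F, and suppose K (with the unique extension of v) is defectless over F, i.e., [K:F] = [K̄:F̄]·|Γ_K:Γ_F|. Then for every a ∈ K*, the image of N_{K/F}(a) in the associated graded field gr(F) equals N_{gr(K)/gr(F)}(ã), where ã is the image of a in gr(K). -/
open scoped TensorProduct

universe u v

set_option synthInstance.maxHeartbeats 1000000
set_option maxHeartbeats 2000000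

/-- `v` is a valuation on the (division) ring `D`, written additively, with value group
a totally ordered abelian group `Γ` (and `v 0 = ⊤`). -/
structure IsValn {D : Type*} [Ring D] {Γ : Type*} [AddCommGroup Γ] [LinearOrder Γ] [IsOrderedAddMonoid Γ]
    (v : D → WithTop Γ) : Prop where
  map_zero : v 0 = ⊤
  ne_top : ∀ a : D, a ≠ 0 → v a ≠ ⊤
  map_one : v 1 = 0
  map_mul : ∀ a b : D, v (a * b) = v a + v b
  add_ge : ∀ a b : D, min (v a) (v b) ≤ v (a + b)

/-- `(gD, 𝒟, tilde)` is the associated graded ring of the valuation `v` on `D`: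
`tilde : D → gD` realizes, for `a ≠ 0`, the image of `a` in the quotient
`D^{≥ v(a)}/D^{> v(a)} = gD_{v(a)}`, and `gD` is generated by these images. -/
structure IsAssocGraded {D : Type*} [Ring D] {Γ : Type*} [AddCommGroup Γ] [LinearOrder Γ] [IsOrderedAddMonoid Γ]
    {gD : Type*} [Ring gD]
    (v : D → WithTop Γ) (𝒟 : Γ → AddSubgroup gD) (tilde : D → gD) : Prop where
  map_zero : tilde 0 = 0
  map_one : tilde 1 = 1
  map_mul : ∀ a b : D, tilde (a * b) = tilde a * tilde b
  mem : ∀ (a : D) (γ : Γ), v a = (γ : WithTop Γ) → tilde a ∈ 𝒟 γ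
  ne_zero : ∀ a : D, a ≠ 0 → tilde a ≠ 0
  eq_iff : ∀ a b : D, a ≠ 0 → b ≠ 0 → (tilde a = tilde b ↔ v b < v (a - b))
  surj : ∀ γ : Γ, ∀ x ∈ 𝒟 γ, x ≠ 0 → ∃ a : D, v a = (γ : WithTop Γ) ∧ tilde a = x
  add_of_eq : ∀ a b : D, v (a + b) = v a → v b = v a → tilde (a + b) = tilde a + tilde b
  add_of_lt : ∀ a b : D, v b = v a → v a < v (a + b) → tilde a + tilde b = 0

section Aux1
variable {Γ : Type} [AddCommGroup Γ] [LinearOrder Γ] [IsOrderedAddMonoid Γ] [DecidableEq Γ]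
set_option linter.unusedSectionVars false
variable {K : Type} [Field K] {gK : Type} [CommRing gK]
variable {v : K → WithTop Γ} {𝒦 : Γ → AddSubgroup gK} {tilde : K → gK}

lemma aux_veq_top (hv : IsValn v) {x : K} (h : v x = ⊤) : x = 0 := by
  by_contra hx; exact hv.ne_top x hx h

lemma aux_vneg (hv : IsValn v) (x : K) : v (-x) = v x := by
  have h1 : v (-1 : K) = 0 := by
    obtain ⟨g, hg⟩ := WithTop.ne_top_iff_exists.mp (hv.ne_top (-1) (by norm_num))
    have h := hv.map_mul (-1) (-1)
    rw [neg_mul_neg, one_mul, hv.map_one, ← hg, ← WithTop.coe_add] at h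
    have hg0 : g + g = 0 := by exact_mod_cast h.symm
    have : g = 0 := by
      rcases lt_trichotomy g 0 with hl | he | hgt
      · exact absurd hg0 (ne_of_lt (add_neg hl hl))
      · exact he
      · exact absurd hg0 (ne_of_gt (add_pos hgt hgt))
    rw [← hg, this]; rfl
  calc v (-x) = v ((-1) * x) := by rw [neg_one_mul]
    _ = v (-1) + v x := hv.map_mul _ _
    _ = v x := by rw [h1, zero_add]

lemma aux_vadd_lt (hv : IsValn v) {x y : K} (h : v x < v y) : v (x + y) = v x := by
  refine le_antisymm ?_ ?_
  · by_contra hlt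
    push_neg at hlt
    have h2 : (x + y) + -y = x := by ring
    have h3 := hv.add_ge (x + y) (-y)
    rw [h2, aux_vneg hv] at h3
    exact absurd h3 (not_le.mpr (lt_min hlt h))
  · have := hv.add_ge x y; rwa [min_eq_left h.le] at this

lemma aux_tneg (hv : IsValn v) (hgr : IsAssocGraded v 𝒦 tilde) (x : K) :
    tilde (-x) = - tilde x := by
  have hm1 : tilde (-1 : K) = -1 := by
    have h := hgr.add_of_lt 1 (-1) (by rw [aux_vneg hv]) (by
      rw [add_neg_cancel, hv.map_zero, hv.map_one]
      exact WithTop.coe_lt_top 0)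
    rw [hgr.map_one] at h
    exact eq_neg_of_add_eq_zero_right h
  calc tilde (-x) = tilde ((-1) * x) := by rw [neg_one_mul]
    _ = tilde (-1) * tilde x := hgr.map_mul _ _
    _ = - tilde x := by rw [hm1, neg_one_mul]

/-- truncation to the degree-`γ` leading term -/
noncomputable def grT (v : K → WithTop Γ) (tilde : K → gK) (γ : Γ) (x : K) : gK :=
  if v x = (γ : WithTop Γ) then tilde x else 0

lemma grT_add (hv : IsValn v) (hgr : IsAssocGraded v 𝒦 tilde) (γ : Γ) :
    ∀ {x y : K}, (γ : WithTop Γ) ≤ v x → (γ : WithTop Γ) ≤ v y →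
    grT v tilde γ (x + y) = grT v tilde γ x + grT v tilde γ y := by
  have mixed : ∀ {x y : K}, v x = (γ : WithTop Γ) → (γ : WithTop Γ) < v y →
      grT v tilde γ (x + y) = grT v tilde γ x + grT v tilde γ y := by
    intro x y h1 h2
    have hxy : v (x + y) = v x := aux_vadd_lt hv (by rw [h1]; exact h2)
    have hx0 : x ≠ 0 := by intro h0; rw [h0, hv.map_zero] at h1; exact WithTop.top_ne_coe h1
    have hxy0 : x + y ≠ 0 := by
      intro h0; rw [h0, hv.map_zero] at hxy; exact hv.ne_top x hx0 hxy.symm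
    have heq : tilde (x + y) = tilde x := by
      rw [hgr.eq_iff (x + y) x hxy0 hx0]
      have : (x + y) - x = y := by ring
      rw [this, h1]; exact h2
    unfold grT
    rw [if_pos (hxy.trans h1), if_pos h1, if_neg (ne_of_gt h2), heq,
      add_zero]
  intro x y hx hy
  rcases eq_or_lt_of_le hx with h1 | h1 <;> rcases eq_or_lt_of_le hy with h2 | h2
  · -- both equal γ
    have hmin : (γ : WithTop Γ) ≤ v (x + y) := by
      refine le_trans ?_ (hv.add_ge x y); rw [← h1, ← h2]; simp
    rcases eq_or_lt_of_le hmin with he | hl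
    · unfold grT
      rw [if_pos he.symm, if_pos h1.symm, if_pos h2.symm,
        hgr.add_of_eq x y (he.symm.trans h1) (h2.symm.trans h1)]
    · unfold grT
      rw [if_pos h1.symm, if_pos h2.symm, if_neg (ne_of_gt hl),
        hgr.add_of_lt x y (h2.symm.trans h1) (by rw [← h1]; exact hl)]
  · exact mixed h1.symm h2
  · rw [add_comm x y, add_comm (grT v tilde γ x)]; exact mixed h2.symm h1
  · have hmin : (γ : WithTop Γ) < v (x + y) := lt_of_lt_of_le (lt_min h1 h2) (hv.add_ge x y)
    unfold grT
    rw [if_neg (ne_of_gt h1), if_neg (ne_of_gt h2), if_neg (ne_of_gt hmin), add_zero]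

lemma grT_sum (hv : IsValn v) (hgr : IsAssocGraded v 𝒦 tilde) (γ : Γ) {ι : Type*}
    (s : Finset ι) (c : ι → K) (h : ∀ i ∈ s, (γ : WithTop Γ) ≤ v (c i)) :
    ((γ : WithTop Γ) ≤ v (∑ i ∈ s, c i)) ∧
      grT v tilde γ (∑ i ∈ s, c i) = ∑ i ∈ s, grT v tilde γ (c i) := by
  classical
  induction s using Finset.cons_induction with
  | empty =>
    refine ⟨by rw [Finset.sum_empty, hv.map_zero]; exact le_top, ?_⟩
    rw [Finset.sum_empty, Finset.sum_empty]
    unfold grT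
    rw [if_neg (by rw [hv.map_zero]; exact (WithTop.coe_ne_top).symm)]
  | cons a s ha ih =>
    obtain ⟨h1, h2⟩ := ih (fun i hi => h i (Finset.mem_cons_of_mem hi))
    have hva := h a (Finset.mem_cons_self a s)
    rw [Finset.sum_cons, Finset.sum_cons]
    exact ⟨le_trans (le_min hva h1) (hv.add_ge _ _), by rw [grT_add hv hgr γ hva h1, h2]⟩

lemma aux_vprod (hv : IsValn v) {ι : Type*} (s : Finset ι) (x : ι → K) :
    v (∏ i ∈ s, x i) = ∑ i ∈ s, v (x i) := by
  classical
  induction s using Finset.cons_induction with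
  | empty => rw [Finset.prod_empty, Finset.sum_empty, hv.map_one]
  | cons a s ha ih => rw [Finset.prod_cons, Finset.sum_cons, hv.map_mul, ih]

lemma aux_tprod (hgr : IsAssocGraded v 𝒦 tilde) {ι : Type*} (s : Finset ι) (x : ι → K) :
    tilde (∏ i ∈ s, x i) = ∏ i ∈ s, tilde (x i) := by
  classical
  induction s using Finset.cons_induction with
  | empty => rw [Finset.prod_empty, Finset.prod_empty, hgr.map_one]
  | cons a s ha ih => rw [Finset.prod_cons, Finset.prod_cons, hgr.map_mul, ih]

lemma aux_coe_sum {ι : Type*} (s : Finset ι) (w : ι → Γ) :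
    ((↑(∑ i ∈ s, w i) : WithTop Γ)) = ∑ i ∈ s, (↑(w i) : WithTop Γ) := by
  classical
  induction s using Finset.cons_induction with
  | empty => simp
  | cons a s ha ih => rw [Finset.sum_cons, Finset.sum_cons, WithTop.coe_add, ih]

end Aux1


section Aux2
variable {Γ : Type} [AddCommGroup Γ] [LinearOrder Γ] [IsOrderedAddMonoid Γ] [DecidableEq Γ]
set_option linter.unusedSectionVars false
variable {F : Type} [Field F] {K : Type} [Field K] [Algebra F K]
variable {gK : Type} [CommRing gK]
variable {v : K → WithTop Γ} {𝒦 : Γ → AddSubgroup gK} {tilde : K → gK}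

/-- `x` is the image of an element of `F`, homogeneous of degree `β` (or zero). -/
def Qrep (v : K → WithTop Γ) (tilde : K → gK) (F : Type) [Field F] [Algebra F K]
    (β : Γ) (x : gK) : Prop :=
  ∃ c : F, x = tilde (algebraMap F K c) ∧ (c = 0 ∨ v (algebraMap F K c) = (β : WithTop Γ))

lemma Qrep_zero (hgr : IsAssocGraded v 𝒦 tilde) (β : Γ) : Qrep v tilde F β (0 : gK) :=
  ⟨0, by rw [map_zero, hgr.map_zero], Or.inl rfl⟩

lemma Qrep_mem (hgr : IsAssocGraded v 𝒦 tilde) {β : Γ} {x : gK}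
    (h : Qrep v tilde F β x) : x ∈ 𝒦 β := by
  obtain ⟨c, rfl, hc | hc⟩ := h
  · rw [hc, map_zero, hgr.map_zero]; exact zero_mem _
  · exact hgr.mem _ β hc

lemma Qrep_add (hv : IsValn v) (hgr : IsAssocGraded v 𝒦 tilde) {β : Γ} {x y : gK}
    (hx : Qrep v tilde F β x) (hy : Qrep v tilde F β y) : Qrep v tilde F β (x + y) := by
  obtain ⟨c, rfl, hc⟩ := hx
  obtain ⟨c', rfl, hc'⟩ := hy
  rcases hc with rfl | hc
  · rw [map_zero, hgr.map_zero, zero_add]; exact ⟨c', rfl, hc'⟩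
  rcases hc' with rfl | hc'
  · rw [map_zero, hgr.map_zero, add_zero]; exact ⟨c, rfl, Or.inr hc⟩
  have key : tilde (algebraMap F K c) + tilde (algebraMap F K c') =
      grT v tilde β (algebraMap F K (c + c')) := by
    rw [map_add, grT_add hv hgr β (le_of_eq hc.symm) (le_of_eq hc'.symm)]
    unfold grT
    rw [if_pos hc, if_pos hc']
  rw [key]
  unfold grT
  by_cases hcc : v (algebraMap F K (c + c')) = (β : WithTop Γ)
  · rw [if_pos hcc]; exact ⟨c + c', rfl, Or.inr hcc⟩
  · rw [if_neg hcc]; exact Qrep_zero hgr β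

lemma Qrep_neg (hv : IsValn v) (hgr : IsAssocGraded v 𝒦 tilde) {β : Γ} {x : gK}
    (hx : Qrep v tilde F β x) : Qrep v tilde F β (-x) := by
  obtain ⟨c, rfl, hc⟩ := hx
  refine ⟨-c, ?_, ?_⟩
  · rw [map_neg, aux_tneg hv hgr]
  · rcases hc with rfl | hc
    · exact Or.inl (neg_zero)
    · exact Or.inr (by rw [map_neg, aux_vneg hv]; exact hc)

lemma Qrep_mul (hv : IsValn v) (hgr : IsAssocGraded v 𝒦 tilde) {β β' : Γ} {x y : gK}
    (hx : Qrep v tilde F β x) (hy : Qrep v tilde F β' y) : Qrep v tilde F (β + β') (x * y) := by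
  obtain ⟨c, rfl, hc⟩ := hx
  obtain ⟨c', rfl, hc'⟩ := hy
  refine ⟨c * c', ?_, ?_⟩
  · rw [map_mul, hgr.map_mul]
  · rcases hc with rfl | hc
    · exact Or.inl (zero_mul c')
    rcases hc' with rfl | hc'
    · exact Or.inl (mul_zero c)
    · exact Or.inr (by rw [map_mul, hv.map_mul, hc, hc', WithTop.coe_add])

lemma Qrep_gen (hv : IsValn v) (hgr : IsAssocGraded v 𝒦 tilde) [GradedRing 𝒦] (c : F) (β : Γ) :
    Qrep v tilde F β ((DirectSum.decompose 𝒦 (tilde (algebraMap F K c)) β : gK)) := by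
  by_cases hc : c = 0
  · subst hc
    rw [map_zero, hgr.map_zero]
    rw [show (DirectSum.decompose 𝒦 (0 : gK) β : gK) = 0 by simp]
    exact Qrep_zero hgr β
  · have hne : algebraMap F K c ≠ 0 := by
      simpa using (map_ne_zero_iff _ (algebraMap F K).injective).mpr hc
    obtain ⟨γ₀, hγ₀⟩ := WithTop.ne_top_iff_exists.mp (hv.ne_top _ hne)
    have hmem : tilde (algebraMap F K c) ∈ 𝒦 γ₀ := hgr.mem _ γ₀ hγ₀.symm
    by_cases hβ : β = γ₀
    · subst hβ
      rw [DirectSum.decompose_of_mem_same 𝒦 hmem]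
      exact ⟨c, rfl, Or.inr hγ₀.symm⟩
    · rw [DirectSum.decompose_of_mem_ne 𝒦 hmem (Ne.symm hβ)]
      exact Qrep_zero hgr β

lemma decompose_coe_sum [GradedRing 𝒦] {ι : Type*} (s : Finset ι) (z : ι → gK) (β : Γ) :
    (DirectSum.decompose 𝒦 (∑ i ∈ s, z i) β : gK) =
      ∑ i ∈ s, (DirectSum.decompose 𝒦 (z i) β : gK) := by
  classical
  induction s using Finset.cons_induction with
  | empty => simp
  | cons a s ha ih =>
    rw [Finset.sum_cons, Finset.sum_cons, DirectSum.decompose_add, DirectSum.add_apply,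
      AddSubgroup.coe_add, ih]

lemma decompose_Qrep (hv : IsValn v) (hgr : IsAssocGraded v 𝒦 tilde) [GradedRing 𝒦] {r : gK}
    (hr : r ∈ Subring.closure (Set.range fun c : F => tilde (algebraMap F K c))) :
    ∀ β : Γ, Qrep v tilde F β ((DirectSum.decompose 𝒦 r β : gK)) := by
  classical
  induction hr using Subring.closure_induction with
  | mem x hx =>
    obtain ⟨c, rfl⟩ := hx
    exact fun β => Qrep_gen hv hgr c β
  | zero =>
    intro β
    rw [show (DirectSum.decompose 𝒦 (0 : gK) β : gK) = 0 by simp]; exact Qrep_zero hgr β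
  | one =>
    intro β
    have h1 : (1 : gK) = tilde (algebraMap F K 1) := by rw [map_one, hgr.map_one]
    rw [h1]; exact Qrep_gen hv hgr 1 β
  | add x y hx hy ihx ihy =>
    intro β
    rw [DirectSum.decompose_add, DirectSum.add_apply, AddSubgroup.coe_add]
    exact Qrep_add hv hgr (ihx β) (ihy β)
  | neg x hx ihx =>
    intro β
    rw [show (DirectSum.decompose 𝒦 (-x) β : gK) = -(DirectSum.decompose 𝒦 x β : gK) by
      rw [DirectSum.decompose_neg, DFinsupp.neg_apply, AddSubgroup.coe_neg]]
    exact Qrep_neg hv hgr (ihx β)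
  | mul x y hx hy ihx ihy =>
    intro β
    have hxsum : x * y = ∑ γ ∈ DFinsupp.support (DirectSum.decompose 𝒦 x),
        (DirectSum.decompose 𝒦 x γ : gK) * y := by
      rw [← Finset.sum_mul, DirectSum.sum_support_decompose]
    rw [hxsum, decompose_coe_sum]
    refine Finset.sum_induction _ _ (fun a b ha hb => Qrep_add hv hgr ha hb)
      (Qrep_zero hgr β) ?_
    intro γ _
    have hmem : (DirectSum.decompose 𝒦 x γ : gK) ∈ 𝒦 γ := SetLike.coe_mem _
    obtain ⟨δ, hδ⟩ : ∃ δ, β = γ + δ := ⟨β - γ, by abel⟩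
    subst hδ
    rw [DirectSum.coe_decompose_mul_add_of_left_mem 𝒦 hmem]
    exact Qrep_mul hv hgr (ihx γ) (ihy δ)

lemma decompose_mem_closure (hv : IsValn v) (hgr : IsAssocGraded v 𝒦 tilde) [GradedRing 𝒦]
    {r : gK} (hr : r ∈ Subring.closure (Set.range fun c : F => tilde (algebraMap F K c)))
    (β : Γ) :
    (DirectSum.decompose 𝒦 r β : gK) ∈
      Subring.closure (Set.range fun c : F => tilde (algebraMap F K c)) := by
  obtain ⟨c, hc, -⟩ := decompose_Qrep hv hgr hr β
  rw [hc]
  exact Subring.subset_closure ⟨c, rfl⟩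

end Aux2

/-- Let `F ⊆ K` be fields with `[K:F] < ∞`, `v` a henselian valuation on
`F`, and suppose `K` (with the unique extension of `v`) is defectless over `F`
(equivalently, by the fundamental equality
`[gr(K):gr(F)] = [K̄:F̄]·|Γ_K:Γ_F|`, that `[K:F] = [gr(K):gr(F)]`).  Then for every
`a ∈ K*`, the image of `N_{K/F}(a)` in `gr(F)` equals `N_{gr(K)/gr(F)}(ã)`, the
determinant of multiplication by `ã` on the `gr(F)`-module `gr(K)`. -/
theorem residue_of_norm_eq_graded_norm_of_defectless
    {Γ : Type} [AddCommGroup Γ] [LinearOrder Γ] [IsOrderedAddMonoid Γ] [DecidableEq Γ]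
    {F : Type} [Field F] {K : Type} [Field K] [Algebra F K]
    [Module.Finite F K]
    (v : K → WithTop Γ) (hv : IsValn v)
    (hhens : ∀ V : Subring F, (∀ x : F, x ∈ V ↔ 0 ≤ v (algebraMap F K x)) →
      HenselianLocalRing V)
    -- the associated graded field `gr(K)` and, inside it, `gr(F)`
    {gK : Type} [CommRing gK] (𝒦 : Γ → AddSubgroup gK) [GradedRing 𝒦]
    (tilde : K → gK) (hgr : IsAssocGraded v 𝒦 tilde)
    -- `K` is defectless over `F`: `[K:F] = [K̄:F̄]·|Γ_K:Γ_F| = [gr(K):gr(F)]`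
    (hdefectless :
      Module.finrank (Subring.closure (Set.range fun c : F => tilde (algebraMap F K c)))
        gK = Module.finrank F K) :
    ∀ a : K, a ≠ 0 →
      ∃ f : gK →ₗ[Subring.closure (Set.range fun c : F => tilde (algebraMap F K c))] gK,
        (∀ x : gK, f x = tilde a * x) ∧
        tilde (algebraMap F K (Algebra.norm F a)) = LinearMap.det f := by
  classical
  intro a ha
  set R := Subring.closure (Set.range fun c : F => tilde (algebraMap F K c)) with hRdef
  have hφmem : ∀ c : F, tilde (algebraMap F K c) ∈ R := fun c => Subring.subset_closure ⟨c, rfl⟩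
  have hgK1 : (1 : gK) ≠ 0 := by
    rw [← hgr.map_one]; exact hgr.ne_zero 1 one_ne_zero
  haveI : Nontrivial gK := ⟨⟨1, 0, hgK1⟩⟩
  haveI : Nontrivial R := ⟨⟨1, 0, fun h => hgK1 (congrArg Subtype.val h)⟩⟩
  haveI : StrongRankCondition R := commRing_strongRankCondition R
  set n := Module.finrank F K with hndef
  have hn : 0 < n := Module.finrank_pos
  -- the collection of linearly independent families of homogeneous images
  set P : ℕ → Prop := fun m => ∃ e : Fin m → K, (∀ i, e i ≠ 0) ∧
    LinearIndependent R (fun i => tilde (e i)) with hPdef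
  have hbound : ∀ m, P m → m ≤ n := by
    rintro m ⟨e, he0, hind⟩
    have hcard := hind.cardinal_le_rank
    have hlt : Module.rank R gK < Cardinal.aleph0 := by
      by_contra hge
      push_neg at hge
      have h0 : Module.finrank R gK = 0 := Cardinal.toNat_apply_of_aleph0_le hge
      rw [hdefectless] at h0
      omega
    have hr2 : Module.rank R gK = (n : Cardinal) := by
      have h1 := Cardinal.cast_toNat_of_lt_aleph0 hlt
      rw [← h1, show (Module.rank R gK).toNat = n from hdefectless]
    rw [Cardinal.mk_fin, hr2] at hcard
    exact_mod_cast hcard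
  have hP0 : P 0 := ⟨fun i => i.elim0, fun i => i.elim0, linearIndependent_empty_type⟩
  set m := Nat.findGreatest P n with hmdef
  have hPm : P m := Nat.findGreatest_spec (Nat.zero_le n) hP0
  have hmax : ¬ P (m + 1) := by
    intro hP
    exact Nat.findGreatest_is_greatest (by omega) (hbound _ hP) hP
  obtain ⟨e, he0, hind⟩ := hPm
  have hγ : ∀ i, ∃ g : Γ, v (e i) = (g : WithTop Γ) := fun i => by
    obtain ⟨g, hg⟩ := WithTop.ne_top_iff_exists.mp (hv.ne_top _ (he0 i)); exact ⟨g, hg.symm⟩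
  choose γi hγi using hγ
  have hKmem : ∀ i, tilde (e i) ∈ 𝒦 (γi i) := fun i => hgr.mem _ _ (hγi i)
  -- the homogeneous images span gK over R
  have hhom : ∀ (β : Γ) (z : gK), z ∈ 𝒦 β →
      z ∈ Submodule.span R (Set.range fun i => tilde (e i)) := by
    intro β z hz
    by_contra hzW
    have hz0 : z ≠ 0 := fun h => hzW (h ▸ (Submodule.zero_mem _))
    obtain ⟨x, hx, htx⟩ := hgr.surj β z hz hz0
    have hx0 : x ≠ 0 := fun h => by rw [h, hv.map_zero] at hx; exact WithTop.top_ne_coe hx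
    apply hmax
    refine ⟨Fin.snoc e x, ?_, ?_⟩
    · intro i
      refine Fin.lastCases ?_ ?_ i
      · rw [Fin.snoc_last]; exact hx0
      · intro j; rw [Fin.snoc_castSucc]; exact he0 j
    · rw [Fintype.linearIndependent_iff]
      intro g hg
      have hglast : g (Fin.last m) = 0 := by
        by_contra hgl
        apply hzW
        have hcoe : ((g (Fin.last m) : gK)) ≠ 0 := fun h => hgl (Subtype.ext h)
        have hcomp : ∃ β₀, (DirectSum.decompose 𝒦 ((g (Fin.last m) : gK)) β₀ : gK) ≠ 0 := by
          by_contra hall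
          push_neg at hall
          apply hcoe
          conv_lhs => rw [← DirectSum.sum_support_decompose 𝒦 ((g (Fin.last m) : gK))]
          exact Finset.sum_eq_zero (fun β' _ => hall β')
        obtain ⟨β₀, hβ₀⟩ := hcomp
        obtain ⟨c, hc, hcv⟩ := decompose_Qrep hv hgr (g (Fin.last m)).2 β₀
        have hcne : c ≠ 0 := by
          rintro rfl; rw [map_zero, hgr.map_zero] at hc; exact hβ₀ hc
        -- project the relation to degree β₀ + β
        have h1 : (DirectSum.decompose 𝒦
            (∑ i : Fin (m+1), g i • tilde ((Fin.snoc e x : Fin (m+1) → K) i)) (β₀ + β) : gK) = 0 := by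
          rw [hg]; simp
        rw [decompose_coe_sum, Fin.sum_univ_castSucc] at h1
        have hterm1 : ∀ i : Fin m,
            (DirectSum.decompose 𝒦 (g i.castSucc • tilde ((Fin.snoc e x : Fin (m+1) → K) i.castSucc))
              (β₀ + β) : gK) =
            (DirectSum.decompose 𝒦 ((g i.castSucc : gK)) (β₀ + β - γi i) : gK) * tilde (e i) := by
          intro i
          rw [Fin.snoc_castSucc]
          have hidx : β₀ + β = (β₀ + β - γi i) + γi i := by abel
          have hsm : g i.castSucc • tilde (e i) = ((g i.castSucc : gK)) * tilde (e i) := rfl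
          rw [hsm]
          conv_lhs => rw [hidx]
          exact DirectSum.coe_decompose_mul_add_of_right_mem 𝒦 (hKmem i)
        have hterm2 : (DirectSum.decompose 𝒦 (g (Fin.last m) • tilde ((Fin.snoc e x : Fin (m+1) → K) (Fin.last m)))
            (β₀ + β) : gK) = tilde (algebraMap F K c) * z := by
          rw [Fin.snoc_last, htx]
          have hsm : g (Fin.last m) • z = ((g (Fin.last m) : gK)) * z := rfl
          rw [hsm, DirectSum.coe_decompose_mul_add_of_right_mem 𝒦 hz, ← hc]
        rw [Finset.sum_congr rfl (fun i _ => hterm1 i), hterm2] at h1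
        -- now derive z ∈ span
        set W := Submodule.span R (Set.range fun i => tilde (e i)) with hWdef
        have hsum_mem : (∑ i : Fin m,
            (DirectSum.decompose 𝒦 ((g i.castSucc : gK)) (β₀ + β - γi i) : gK) * tilde (e i))
            ∈ W := by
          refine Submodule.sum_mem _ (fun i _ => ?_)
          exact Submodule.smul_mem _
            (⟨_, decompose_mem_closure hv hgr (g i.castSucc).2 (β₀ + β - γi i)⟩ : R)
            (Submodule.subset_span ⟨i, rfl⟩)
        have hφz : tilde (algebraMap F K c) * z ∈ W := by
          have h2 : tilde (algebraMap F K c) * z = -(∑ i : Fin m,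
              (DirectSum.decompose 𝒦 ((g i.castSucc : gK)) (β₀ + β - γi i) : gK) * tilde (e i)) :=
            eq_neg_of_add_eq_zero_right h1
          rw [h2]; exact Submodule.neg_mem _ hsum_mem
        have hinv : tilde (algebraMap F K c⁻¹) * tilde (algebraMap F K c) = 1 := by
          rw [← hgr.map_mul, ← map_mul, inv_mul_cancel₀ hcne, map_one, hgr.map_one]
        have h3 : z = (⟨tilde (algebraMap F K c⁻¹), hφmem c⁻¹⟩ : R) •
            (tilde (algebraMap F K c) * z) := by
          show z = tilde (algebraMap F K c⁻¹) * (tilde (algebraMap F K c) * z)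
          rw [← mul_assoc, hinv, one_mul]
        rw [h3]
        exact Submodule.smul_mem _ _ hφz
      rw [Fin.sum_univ_castSucc, hglast, zero_smul, add_zero] at hg
      simp only [Fin.snoc_castSucc] at hg
      have hz' := Fintype.linearIndependent_iff.mp hind (fun i => g i.castSucc) hg
      intro i
      refine Fin.lastCases hglast (fun j => hz' j) i
  have hspan : Submodule.span R (Set.range fun i => tilde (e i)) = ⊤ := by
    rw [Submodule.eq_top_iff']
    intro x
    rw [← DirectSum.sum_support_decompose 𝒦 x]
    exact Submodule.sum_mem _ (fun β _ => hhom β _ (SetLike.coe_mem _))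
  let B : Module.Basis (Fin m) R gK := Module.Basis.mk hind (le_of_eq hspan.symm)
  have hB : ∀ i, B i = tilde (e i) := fun i => Module.Basis.mk_apply _ _ i
  have hmn : m = n := by
    have hfrm : Module.finrank R gK = m := by rw [Module.finrank_eq_card_basis B, Fintype.card_fin]
    rw [← hfrm, hdefectless]
  -- splitting property of the basis e
  have hS : ∀ (c : Fin m → F) (i : Fin m),
      v (∑ j, algebraMap F K (c j) * e j) ≤ v (algebraMap F K (c i) * e i) := by
    intro c i
    by_contra hlt
    push_neg at hlt
    have hne : v (algebraMap F K (c i) * e i) ≠ ⊤ := hlt.ne_top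
    obtain ⟨i₀, -, hmin⟩ := Finset.exists_min_image Finset.univ
      (fun j => v (algebraMap F K (c j) * e j)) ⟨i, Finset.mem_univ i⟩
    have hμtop : v (algebraMap F K (c i₀) * e i₀) ≠ ⊤ := by
      intro h
      exact hne (top_le_iff.mp (h ▸ hmin i (Finset.mem_univ i)))
    obtain ⟨μ, hμ⟩ := WithTop.ne_top_iff_exists.mp hμtop
    have hall : ∀ j ∈ Finset.univ, (μ : WithTop Γ) ≤ v (algebraMap F K (c j) * e j) :=
      fun j _ => hμ ▸ hmin j (Finset.mem_univ j)
    obtain ⟨hge, hTsum⟩ := grT_sum hv hgr μ Finset.univ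
      (fun j => algebraMap F K (c j) * e j) hall
    have hSgt : (μ : WithTop Γ) < v (∑ j, algebraMap F K (c j) * e j) :=
      lt_of_le_of_lt (hμ ▸ hmin i (Finset.mem_univ i)) hlt
    have hT0 : grT v tilde μ (∑ j, algebraMap F K (c j) * e j) = 0 := by
      unfold grT; rw [if_neg (ne_of_gt hSgt)]
    have hrel : ∑ j, (if v (algebraMap F K (c j) * e j) = (μ : WithTop Γ)
        then (⟨tilde (algebraMap F K (c j)), hφmem _⟩ : R) else 0) • tilde (e j) = 0 := by
      have hterm : ∀ j, (if v (algebraMap F K (c j) * e j) = (μ : WithTop Γ)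
          then (⟨tilde (algebraMap F K (c j)), hφmem _⟩ : R) else 0) • tilde (e j) =
          grT v tilde μ (algebraMap F K (c j) * e j) := by
        intro j
        by_cases hj : v (algebraMap F K (c j) * e j) = (μ : WithTop Γ)
        · rw [if_pos hj]
          show tilde (algebraMap F K (c j)) * tilde (e j) = _
          unfold grT; rw [if_pos hj, ← hgr.map_mul]
        · rw [if_neg hj]
          unfold grT; rw [if_neg hj, zero_smul]
      rw [Finset.sum_congr rfl (fun j _ => hterm j), ← hTsum, hT0]
    have hz' := Fintype.linearIndependent_iff.mp hind _ hrel i₀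
    rw [if_pos hμ.symm] at hz'
    have hci₀ : algebraMap F K (c i₀) ≠ 0 := by
      intro h0
      rw [h0, zero_mul, hv.map_zero] at hμ
      exact WithTop.coe_ne_top hμ
    exact hgr.ne_zero _ hci₀ (congrArg Subtype.val hz')
  -- e is linearly independent over F, hence a basis of K
  have hFind : LinearIndependent F e := by
    rw [Fintype.linearIndependent_iff]
    intro c hc i
    by_contra hci
    have h0 : (∑ j, algebraMap F K (c j) * e j) = (0 : K) := by
      rw [← hc]; exact Finset.sum_congr rfl fun j _ => (Algebra.smul_def _ _).symm
    have hcc := hS c i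
    rw [h0, hv.map_zero] at hcc
    have h1 : algebraMap F K (c i) * e i = 0 := aux_veq_top hv (top_le_iff.mp hcc)
    rcases mul_eq_zero.mp h1 with h2 | h2
    · exact hci ((map_eq_zero _).mp h2)
    · exact he0 i h2
  haveI : Nonempty (Fin m) := ⟨⟨0, by omega⟩⟩
  let bE : Module.Basis (Fin m) F K := basisOfLinearIndependentOfCardEqFinrank hFind
    (by rw [Fintype.card_fin, hmn])
  have hbE : ∀ i, bE i = e i := fun i => by
    rw [show (bE : Fin m → K) = e from coe_basisOfLinearIndependentOfCardEqFinrank hFind _]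
  -- multiplication matrix of a over F
  set C : Matrix (Fin m) (Fin m) F := Algebra.leftMulMatrix bE a with hCdef
  have hnorm : algebraMap F K (Algebra.norm F a) = algebraMap F K C.det := by
    rw [Algebra.norm_eq_matrix_det bE a]
  have hCe : ∀ j, a * e j = ∑ i, algebraMap F K (C i j) * e i := by
    intro j
    have h1 : ∑ i, C i j • bE i = a * bE j := by
      rw [Finset.sum_congr rfl (fun i _ => by
        rw [show C i j = bE.repr (a * bE j) i from Algebra.leftMulMatrix_eq_repr_mul bE a i j])]
      exact Module.Basis.sum_repr bE (a * bE j)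
    rw [← hbE j, ← h1]
    exact Finset.sum_congr rfl fun i _ => by rw [Algebra.smul_def, hbE i]
  obtain ⟨α, hα⟩ := WithTop.ne_top_iff_exists.mp (hv.ne_top a ha)
  have hterm : ∀ i j, v a + v (e j) ≤ v (algebraMap F K (C i j) * e i) := by
    intro i j
    have h1 := hS (fun i' => C i' j) i
    rw [← hCe j, hv.map_mul] at h1
    exact h1
  -- the graded multiplication matrix
  set M : Matrix (Fin m) (Fin m) R := fun i j =>
    if v (algebraMap F K (C i j) * e i) = v a + v (e j)
    then (⟨tilde (algebraMap F K (C i j)), hφmem _⟩ : R) else 0 with hMdef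
  -- the multiplication linear map
  let f : gK →ₗ[R] gK :=
    { toFun := fun x => tilde a * x
      map_add' := fun x y => mul_add _ _ _
      map_smul' := fun r x => mul_left_comm (tilde a) (r : gK) x }
  refine ⟨f, fun x => rfl, ?_⟩
  have hfB : ∀ j, f (B j) = ∑ i, M i j • B i := by
    intro j
    rw [hB j]
    show tilde a * tilde (e j) = _
    rw [← hgr.map_mul, hCe j]
    have hvae : v (a * e j) = ((α + γi j : Γ) : WithTop Γ) := by
      rw [hv.map_mul, ← hα, hγi j, WithTop.coe_add]
    have hcoe : ((α + γi j : Γ) : WithTop Γ) = v a + v (e j) := by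
      rw [← hα, hγi j, WithTop.coe_add]
    have hge' : ∀ i' ∈ Finset.univ, ((α + γi j : Γ) : WithTop Γ) ≤
        v (algebraMap F K (C i' j) * e i') := fun i' _ => hcoe ▸ hterm i' j
    obtain ⟨-, hTsum⟩ := grT_sum hv hgr (α + γi j) Finset.univ _ hge'
    have hTS : grT v tilde (α + γi j) (∑ i, algebraMap F K (C i j) * e i) =
        tilde (∑ i, algebraMap F K (C i j) * e i) := by
      unfold grT
      rw [if_pos (by rw [← hCe j]; exact hvae)]
    rw [← hTS, hTsum]
    refine Finset.sum_congr rfl (fun i _ => ?_)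
    by_cases hcond : v (algebraMap F K (C i j) * e i) = v a + v (e j)
    · have hcond' : v (algebraMap F K (C i j) * e i) = ((α + γi j : Γ) : WithTop Γ) :=
        hcond.trans hcoe.symm
      unfold grT
      rw [if_pos hcond']
      have hMij : M i j = (⟨tilde (algebraMap F K (C i j)), hφmem _⟩ : R) := by
        rw [hMdef]; exact if_pos hcond
      rw [hB i, hMij]
      show tilde (algebraMap F K (C i j) * e i) = tilde (algebraMap F K (C i j)) * tilde (e i)
      exact hgr.map_mul _ _
    · have hMij : M i j = 0 := by rw [hMdef]; exact if_neg hcond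
      unfold grT
      rw [if_neg (fun h => hcond (h.trans hcoe)), hMij, zero_smul]
  have hftoLin : f = Matrix.toLin B B M := by
    refine B.ext ?_
    intro j
    rw [hfB j, Matrix.toLin_self]
  have hdetfM : LinearMap.det f = M.det := by rw [hftoLin, LinearMap.det_toLin]
  -- det f is invertible
  have hainv : tilde a * tilde a⁻¹ = 1 := by
    rw [← hgr.map_mul, mul_inv_cancel₀ ha, hgr.map_one]
  have hdetne : ((LinearMap.det f : R) : gK) ≠ 0 := by
    let g' : gK →ₗ[R] gK :=
      { toFun := fun x => tilde a⁻¹ * x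
        map_add' := fun x y => mul_add _ _ _
        map_smul' := fun r x => mul_left_comm (tilde a⁻¹) (r : gK) x }
    have hfg : f.comp g' = LinearMap.id := by
      refine LinearMap.ext (fun x => ?_)
      show tilde a * (tilde a⁻¹ * x) = x
      rw [← mul_assoc, hainv, one_mul]
    have hdet1 : LinearMap.det f * LinearMap.det g' = 1 := by
      rw [← LinearMap.det_comp, hfg, LinearMap.det_id]
    intro h0
    have h1 : ((LinearMap.det f * LinearMap.det g' : R) : gK) = 1 := by rw [hdet1]; rfl
    rw [Subring.coe_mul, h0, zero_mul] at h1
    exact hgK1 h1.symm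
  -- determinant expansions
  have htop : ∀ γ' : Γ, v (0 : K) ≠ (γ' : WithTop Γ) := fun γ' h =>
    WithTop.top_ne_coe (hv.map_zero ▸ h)
  have hdetM : ((M.det : R) : gK)
      = ∑ σ : Equiv.Perm (Fin m), Equiv.Perm.sign σ • ∏ i, ((M (σ i) i : R) : gK) := by
    have h1 : ((M.det : R) : gK) = R.subtype M.det := rfl
    rw [h1, RingHom.map_det, Matrix.det_apply]
    refine Finset.sum_congr rfl (fun σ _ => ?_)
    congr 1
  let u : Equiv.Perm (Fin m) → K := fun σ =>
    Equiv.Perm.sign σ • ∏ i, algebraMap F K (C (σ i) i)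
  have hdetexp : algebraMap F K (Algebra.norm F a) = ∑ σ, u σ := by
    rw [hnorm, RingHom.map_det, Matrix.det_apply]
    refine Finset.sum_congr rfl (fun σ _ => ?_)
    congr 1
  have hvsmul : ∀ (z : ℤˣ) (x : K), v (z • x) = v x := by
    intro z x
    rcases Int.units_eq_one_or z with h | h <;> subst h
    · rw [one_smul]
    · rw [Units.smul_def, Units.val_neg, Units.val_one, neg_one_zsmul]
      exact aux_vneg hv x
  have htsmul : ∀ (z : ℤˣ) (x : K), tilde (z • x) = z • tilde x := by
    intro z x
    rcases Int.units_eq_one_or z with h | h <;> subst h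
    · rw [one_smul, one_smul]
    · rw [Units.smul_def, Units.smul_def, Units.val_neg, Units.val_one, neg_one_zsmul,
        neg_one_zsmul]
      exact aux_tneg hv hgr x
  have hkey : ∀ σ : Equiv.Perm (Fin m),
      ((m • α : Γ) : WithTop Γ) ≤ v (u σ) ∧
      grT v tilde (m • α) (u σ) = Equiv.Perm.sign σ • ∏ i, ((M (σ i) i : R) : gK) := by
    intro σ
    by_cases hzero : ∃ i, C (σ i) i = 0
    · obtain ⟨i₀, hi₀⟩ := hzero
      have hprod0 : (∏ i, algebraMap F K (C (σ i) i)) = 0 :=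
        Finset.prod_eq_zero (Finset.mem_univ i₀) (by rw [hi₀, map_zero])
      have hu0 : u σ = 0 := by
        show Equiv.Perm.sign σ • _ = (0 : K); rw [hprod0, smul_zero]
      have hM0 : ((M (σ i₀) i₀ : R) : gK) = 0 := by
        have : M (σ i₀) i₀ = 0 := by
          rw [hMdef]
          refine if_neg ?_
          rw [hi₀, map_zero, zero_mul, hv.map_zero, ← hα, hγi i₀, ← WithTop.coe_add]
          exact WithTop.top_ne_coe
        rw [this]; rfl
      constructor
      · rw [hu0, hv.map_zero]; exact le_top
      · rw [hu0]
        unfold grT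
        rw [if_neg (htop _), Finset.prod_eq_zero (Finset.mem_univ i₀) hM0, smul_zero]
    · push_neg at hzero
      have hw : ∀ i, ∃ wi : Γ, v (algebraMap F K (C (σ i) i)) = (wi : WithTop Γ) := fun i => by
        obtain ⟨wi, hwi⟩ := WithTop.ne_top_iff_exists.mp
          (hv.ne_top _ (fun h0 => hzero i ((map_eq_zero (algebraMap F K)).mp h0)))
        exact ⟨wi, hwi.symm⟩
      choose w hwv using hw
      have hprodv : v (∏ i, algebraMap F K (C (σ i) i)) = ((∑ i, w i : Γ) : WithTop Γ) := by
        rw [aux_vprod hv, aux_coe_sum]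
        exact Finset.sum_congr rfl fun i _ => hwv i
      have hvuσ : v (u σ) = ((∑ i, w i : Γ) : WithTop Γ) := by
        show v (Equiv.Perm.sign σ • _) = _
        rw [hvsmul, hprodv]
      have hineq : ∀ i, α + γi i ≤ w i + γi (σ i) := by
        intro i
        have h := hterm (σ i) i
        rw [hv.map_mul, hwv i, hγi (σ i), ← hα, hγi i, ← WithTop.coe_add, ← WithTop.coe_add] at h
        exact_mod_cast h
      by_cases hkeep : ∀ i, v (algebraMap F K (C (σ i) i) * e (σ i)) = v a + v (e i)
      · have heqi : ∀ i, α + γi i = w i + γi (σ i) := by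
          intro i
          have h := (hkeep i).symm
          rw [hv.map_mul, hwv i, hγi (σ i), ← hα, hγi i, ← WithTop.coe_add,
            ← WithTop.coe_add] at h
          exact_mod_cast h
        have hsum : (∑ i, w i) = m • α := by
          have h1 : ∑ i : Fin m, (α + γi i) = ∑ i : Fin m, (w i + γi (σ i)) :=
            Finset.sum_congr rfl fun i _ => heqi i
          rw [Finset.sum_add_distrib, Finset.sum_add_distrib, Equiv.sum_comp σ γi,
            Finset.sum_const, Finset.card_univ, Fintype.card_fin] at h1
          exact add_right_cancel h1.symm
        refine ⟨by rw [hvuσ, hsum], ?_⟩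
        unfold grT
        rw [if_pos (by rw [hvuσ, hsum])]
        show tilde (Equiv.Perm.sign σ • _) = _
        rw [htsmul, aux_tprod hgr]
        congr 1
        refine Finset.prod_congr rfl fun i _ => ?_
        have hMi : M (σ i) i = (⟨tilde (algebraMap F K (C (σ i) i)), hφmem _⟩ : R) := by
          rw [hMdef]; exact if_pos (hkeep i)
        rw [hMi]
      · push_neg at hkeep
        obtain ⟨i₀, hi₀⟩ := hkeep
        have hstrict : α + γi i₀ < w i₀ + γi (σ i₀) := by
          refine lt_of_le_of_ne (hineq i₀) ?_
          intro heq
          apply hi₀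
          rw [hv.map_mul, hwv i₀, hγi (σ i₀), ← hα, hγi i₀, ← WithTop.coe_add, ← WithTop.coe_add]
          exact_mod_cast heq.symm
        have hsumlt : m • α < ∑ i, w i := by
          have h1 : ∑ i : Fin m, (α + γi i) < ∑ i : Fin m, (w i + γi (σ i)) :=
            Finset.sum_lt_sum (fun i _ => hineq i) ⟨i₀, Finset.mem_univ i₀, hstrict⟩
          rw [Finset.sum_add_distrib, Finset.sum_add_distrib, Equiv.sum_comp σ γi,
            Finset.sum_const, Finset.card_univ, Fintype.card_fin] at h1
          exact lt_of_add_lt_add_right h1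
        refine ⟨by rw [hvuσ]; exact_mod_cast hsumlt.le, ?_⟩
        unfold grT
        have hM0 : ((M (σ i₀) i₀ : R) : gK) = 0 := by
          have : M (σ i₀) i₀ = 0 := by rw [hMdef]; exact if_neg hi₀
          rw [this]; rfl
        rw [if_neg (by rw [hvuσ]; intro h; exact (ne_of_gt hsumlt) (by exact_mod_cast h)),
          Finset.prod_eq_zero (Finset.mem_univ i₀) hM0, smul_zero]
  obtain ⟨hge, hTsum⟩ := grT_sum hv hgr (m • α) Finset.univ u (fun σ _ => (hkey σ).1)
  have hTsum' : grT v tilde (m • α) (∑ σ, u σ) = ((M.det : R) : gK) := by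
    rw [hTsum, Finset.sum_congr rfl (fun σ _ => (hkey σ).2), ← hdetM]
  have hcoedet : ((M.det : R) : gK) = ((LinearMap.det f : R) : gK) :=
    congrArg Subtype.val hdetfM.symm
  have hTne : grT v tilde (m • α) (∑ σ, u σ) ≠ 0 := by
    rw [hTsum', hcoedet]; exact hdetne
  have hvS : v (∑ σ, u σ) = ((m • α : Γ) : WithTop Γ) := by
    by_contra hne'
    apply hTne
    unfold grT; rw [if_neg hne']
  have hfinal : tilde (∑ σ, u σ) = ((M.det : R) : gK) := by
    rw [← hTsum']
    unfold grT
    rw [if_pos hvS]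
  rw [hdetexp, hfinal, hcoedet]
end
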